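/- arXiv:1907.11705 — 6 statements merged into one kernel-verified Lean document; each statement's English description precedes it below -/
import Mathlib

section
/- Let Z ∈ ℝ^{n₁×n₂} have singular value decomposition Z = UΣVᵀ, where U ∈ ℝ^{n₁×k} and V ∈ ℝ^{n₂×k} have orthonormal columns, Σ = diag(σ₁,…,σ_k) with σ₁ ≥ … ≥ σ_k > 0, and k = rank(Z). For τ > 0 define the singular value thresholding operator D_τ(Z) = U diag((σ₁−τ)₊, …, (σ_k−τ)₊) Vᵀ, where t₊ = max{t,0}. Then D_τ(Z) is the unique minimizer over X ∈ ℝ^{n₁×n₂} of the function X ↦ τ‖X‖_* + (1/2)‖X − Z‖_F². -/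
open Matrix

/-- The singular values of `X` (unordered), i.e. square roots of the
eigenvalues of `Xᵀ * X` (over `ℝ`, `Xᴴ = Xᵀ`). -/
noncomputable def singularValues {n₁ n₂ : ℕ} (X : Matrix (Fin n₁) (Fin n₂) ℝ) : Fin n₂ → ℝ :=
  fun i => Real.sqrt ((Matrix.isHermitian_conjTranspose_mul_self X).eigenvalues i)

/-- The nuclear norm: sum of the singular values. -/
noncomputable def nuclearNorm {n₁ n₂ : ℕ} (X : Matrix (Fin n₁) (Fin n₂) ℝ) : ℝ :=
  ∑ i, singularValues X i

/-- The square of the Frobenius norm. -/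
noncomputable def frobSq {n₁ n₂ : ℕ} (X : Matrix (Fin n₁) (Fin n₂) ℝ) : ℝ :=
  ∑ i, ∑ j, (X i j) ^ 2

namespace SVTAux

/-- Frobenius inner product. -/
noncomputable def minner {m n : ℕ} (A B : Matrix (Fin m) (Fin n) ℝ) : ℝ :=
  ∑ i, ∑ j, A i j * B i j

lemma dot_self_nonneg {n : ℕ} (a : Fin n → ℝ) : 0 ≤ a ⬝ᵥ a :=
  Finset.sum_nonneg fun _ _ => mul_self_nonneg _

lemma dot_self_eq_sum_sq {n : ℕ} (a : Fin n → ℝ) : a ⬝ᵥ a = ∑ i, a i ^ 2 := by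
  simp [dotProduct, sq]

lemma dot_cs {n : ℕ} (a b : Fin n → ℝ) :
    a ⬝ᵥ b ≤ Real.sqrt (a ⬝ᵥ a) * Real.sqrt (b ⬝ᵥ b) := by
  have h := Finset.sum_mul_sq_le_sq_mul_sq Finset.univ a b
  calc a ⬝ᵥ b ≤ |a ⬝ᵥ b| := le_abs_self _
    _ = Real.sqrt ((a ⬝ᵥ b) ^ 2) := (Real.sqrt_sq_eq_abs _).symm
    _ ≤ Real.sqrt ((∑ i, a i ^ 2) * ∑ i, b i ^ 2) :=
        Real.sqrt_le_sqrt (by simpa [dotProduct] using h)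
    _ = Real.sqrt (a ⬝ᵥ a) * Real.sqrt (b ⬝ᵥ b) := by
        rw [dot_self_eq_sum_sq, dot_self_eq_sum_sq,
          Real.sqrt_mul (Finset.sum_nonneg fun i _ => sq_nonneg _)]

lemma mulVec_dot {m n : ℕ} (M : Matrix (Fin m) (Fin n) ℝ) (v w : Fin n → ℝ) :
    (M *ᵥ v) ⬝ᵥ (M *ᵥ w) = v ⬝ᵥ ((Mᵀ * M) *ᵥ w) := by
  conv_rhs => rw [← mulVec_mulVec, dotProduct_mulVec, vecMul_transpose]

lemma dot_mulVec_self {m n : ℕ} (M : Matrix (Fin m) (Fin n) ℝ) (h : Mᵀ * M = 1)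
    (v : Fin n → ℝ) : (M *ᵥ v) ⬝ᵥ (M *ᵥ v) = v ⬝ᵥ v := by
  rw [mulVec_dot, h, one_mulVec]

lemma col_dot {m n : ℕ} (M : Matrix (Fin m) (Fin n) ℝ) (h : Mᵀ * M = 1) (i j : Fin n) :
    (fun a => M a i) ⬝ᵥ (fun a => M a j) = if i = j then (1 : ℝ) else 0 := by
  have := congrFun (congrFun h i) j
  simpa [Matrix.mul_apply, dotProduct, Matrix.one_apply] using this

lemma transpose_contract {m n : ℕ} (V : Matrix (Fin m) (Fin n) ℝ) (h : Vᵀ * V = 1)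
    (v : Fin m → ℝ) : (Vᵀ *ᵥ v) ⬝ᵥ (Vᵀ *ᵥ v) ≤ v ⬝ᵥ v := by
  set q := Vᵀ *ᵥ v with hq
  have h1 : v ⬝ᵥ (V *ᵥ q) = q ⬝ᵥ q := by
    rw [dotProduct_mulVec, ← mulVec_transpose]
  have h2 : (V *ᵥ q) ⬝ᵥ (V *ᵥ q) = q ⬝ᵥ q := dot_mulVec_self V h q
  have h3 : q ⬝ᵥ q ≤ Real.sqrt (v ⬝ᵥ v) * Real.sqrt (q ⬝ᵥ q) := by
    calc q ⬝ᵥ q = v ⬝ᵥ (V *ᵥ q) := h1.symm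
      _ ≤ Real.sqrt (v ⬝ᵥ v) * Real.sqrt ((V *ᵥ q) ⬝ᵥ (V *ᵥ q)) := dot_cs _ _
      _ = Real.sqrt (v ⬝ᵥ v) * Real.sqrt (q ⬝ᵥ q) := by rw [h2]
  rcases eq_or_lt_of_le (dot_self_nonneg q) with h0 | hpos
  · rw [← h0]; exact dot_self_nonneg v
  · have h4 : (q ⬝ᵥ q) * (q ⬝ᵥ q) ≤ (v ⬝ᵥ v) * (q ⬝ᵥ q) := by
      calc (q ⬝ᵥ q) * (q ⬝ᵥ q)
          ≤ (Real.sqrt (v ⬝ᵥ v) * Real.sqrt (q ⬝ᵥ q)) *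
            (Real.sqrt (v ⬝ᵥ v) * Real.sqrt (q ⬝ᵥ q)) :=
            mul_le_mul h3 h3 (dot_self_nonneg q) (by positivity)
        _ = (v ⬝ᵥ v) * (q ⬝ᵥ q) := by
            rw [mul_mul_mul_comm, Real.mul_self_sqrt (dot_self_nonneg v),
              Real.mul_self_sqrt (dot_self_nonneg q)]
    exact le_of_mul_le_mul_right h4 hpos

lemma sum_comm3 {α β γ : Type*} [Fintype α] [Fintype β] [Fintype γ] (f : α → β → γ → ℝ) :
    ∑ a, ∑ b, ∑ c, f a b c = ∑ c, ∑ a, ∑ b, f a b c := by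
  rw [show (∑ a, ∑ b, ∑ c, f a b c) = ∑ a, ∑ c, ∑ b, f a b c from
    Finset.sum_congr rfl fun a _ => Finset.sum_comm]
  exact Finset.sum_comm

lemma minner_eq_trace {m n : ℕ} (A B : Matrix (Fin m) (Fin n) ℝ) :
    minner A B = trace (Aᵀ * B) := by
  unfold minner
  rw [Finset.sum_comm]
  simp [Matrix.trace, Matrix.diag, Matrix.mul_apply]

/-- Key duality lemma: for any `G` with operator norm `≤ t`,
`⟪X, G⟫ ≤ t * ‖X‖_*`. -/
lemma lemA {n₁ n₂ : ℕ} (X G : Matrix (Fin n₁) (Fin n₂) ℝ) (t : ℝ) (ht : 0 ≤ t)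
    (hG : ∀ v : Fin n₂ → ℝ, (G *ᵥ v) ⬝ᵥ (G *ᵥ v) ≤ t ^ 2 * (v ⬝ᵥ v)) :
    minner X G ≤ t * nuclearNorm X := by
  set hX := Matrix.isHermitian_conjTranspose_mul_self X with hhX
  set P : Matrix (Fin n₂) (Fin n₂) ℝ := (hX.eigenvectorUnitary : Matrix (Fin n₂) (Fin n₂) ℝ)
    with hPdef
  have hPl : Pᵀ * P = 1 := by
    have := mem_unitaryGroup_iff'.mp hX.eigenvectorUnitary.2
    rw [star_eq_conjTranspose, conjTranspose_eq_transpose_of_trivial P] at this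
    exact this
  have hPr : P * Pᵀ = 1 := by
    have := mem_unitaryGroup_iff.mp hX.eigenvectorUnitary.2
    rw [star_eq_conjTranspose, conjTranspose_eq_transpose_of_trivial P] at this
    exact this
  have hspec : Xᵀ * X = P * diagonal hX.eigenvalues * Pᵀ := by
    have := hX.spectral_theorem
    rw [Unitary.conjStarAlgAut_apply, star_eq_conjTranspose,
      conjTranspose_eq_transpose_of_trivial P] at this
    rw [← conjTranspose_eq_transpose_of_trivial X]
    exact this
  have h2 : (Xᵀ * X) * P = P * diagonal hX.eigenvalues := by
    rw [hspec, Matrix.mul_assoc, hPl, Matrix.mul_one]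
  have heig : ∀ i, (Xᵀ * X) *ᵥ (fun b => P b i) =
      fun b => hX.eigenvalues i * P b i := by
    intro i
    funext a
    have h3 := congrFun (congrFun h2 a) i
    rw [Matrix.mul_diagonal] at h3
    show ((Xᵀ * X) *ᵥ fun b => P b i) a = _
    simp only [mulVec, dotProduct] at h3 ⊢
    rw [Matrix.mul_apply] at h3
    rw [h3, mul_comm]
  have hcol := col_dot P hPl
  have hsv : ∀ i, (X *ᵥ (fun b => P b i)) ⬝ᵥ (X *ᵥ (fun b => P b i)) = hX.eigenvalues i := by
    intro i
    rw [mulVec_dot, heig i]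
    have hc : ∑ b, P b i * P b i = 1 := by simpa [dotProduct] using hcol i i
    calc (fun b => P b i) ⬝ᵥ (fun b => hX.eigenvalues i * P b i)
        = ∑ b, P b i * (hX.eigenvalues i * P b i) := rfl
      _ = hX.eigenvalues i * ∑ b, P b i * P b i := by
          rw [Finset.mul_sum]; exact Finset.sum_congr rfl fun b _ => by ring
      _ = hX.eigenvalues i := by rw [hc, mul_one]
  have main : minner X G = ∑ i, (X *ᵥ (fun b => P b i)) ⬝ᵥ (G *ᵥ (fun b => P b i)) := by
    rw [minner_eq_trace]
    calc trace (Xᵀ * G) = trace (Xᵀ * G * (P * Pᵀ)) := by rw [hPr, Matrix.mul_one]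
      _ = trace ((Xᵀ * G * P) * Pᵀ) := by simp only [Matrix.mul_assoc]
      _ = trace (Pᵀ * (Xᵀ * G * P)) := trace_mul_comm _ _
      _ = trace ((X * P)ᵀ * (G * P)) := by
          simp only [Matrix.transpose_mul, Matrix.mul_assoc]
      _ = ∑ i, ((X * P)ᵀ * (G * P)) i i := by simp [Matrix.trace, Matrix.diag]
      _ = ∑ i, (X *ᵥ (fun b => P b i)) ⬝ᵥ (G *ᵥ (fun b => P b i)) := by
          refine Finset.sum_congr rfl fun i _ => ?_
          simp [Matrix.mul_apply, mulVec, dotProduct, mul_comm]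
  rw [main, nuclearNorm, Finset.mul_sum]
  refine Finset.sum_le_sum fun i _ => ?_
  have h1 := dot_cs (X *ᵥ (fun b => P b i)) (G *ᵥ (fun b => P b i))
  have h2' : Real.sqrt ((X *ᵥ (fun b => P b i)) ⬝ᵥ (X *ᵥ (fun b => P b i)))
      = singularValues X i := by rw [hsv i]; rfl
  have h3 : Real.sqrt ((G *ᵥ (fun b => P b i)) ⬝ᵥ (G *ᵥ (fun b => P b i))) ≤ t := by
    have h4 := hG (fun b => P b i)
    have hp : (fun b => P b i) ⬝ᵥ (fun b => P b i) = 1 := by simpa using hcol i i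
    rw [hp, mul_one] at h4
    calc Real.sqrt _ ≤ Real.sqrt (t ^ 2) := Real.sqrt_le_sqrt h4
      _ = t := Real.sqrt_sq ht
  calc (X *ᵥ (fun b => P b i)) ⬝ᵥ (G *ᵥ (fun b => P b i))
      ≤ Real.sqrt ((X *ᵥ (fun b => P b i)) ⬝ᵥ (X *ᵥ (fun b => P b i))) *
        Real.sqrt ((G *ᵥ (fun b => P b i)) ⬝ᵥ (G *ᵥ (fun b => P b i))) := h1
    _ ≤ singularValues X i * t := by
        rw [h2']
        exact mul_le_mul_of_nonneg_left h3 (Real.sqrt_nonneg _)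
    _ = t * singularValues X i := mul_comm _ _

/-- Generalized Hölder-type bound `⟪U diag(d) Vᵀ, G⟫ ≤ t * Σ d`. -/
lemma lemC {n₁ n₂ k : ℕ} (U : Matrix (Fin n₁) (Fin k) ℝ) (V : Matrix (Fin n₂) (Fin k) ℝ)
    (hU : Uᵀ * U = 1) (hV : Vᵀ * V = 1) (d : Fin k → ℝ) (hd : ∀ j, 0 ≤ d j)
    (G : Matrix (Fin n₁) (Fin n₂) ℝ) (t : ℝ) (ht : 0 ≤ t)
    (hG : ∀ v : Fin n₂ → ℝ, (G *ᵥ v) ⬝ᵥ (G *ᵥ v) ≤ t ^ 2 * (v ⬝ᵥ v)) :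
    minner (U * diagonal d * Vᵀ) G ≤ t * ∑ j, d j := by
  have h1 : ∀ a b, (U * diagonal d * Vᵀ) a b = ∑ j, U a j * d j * V b j := by
    intro a b
    rw [Matrix.mul_apply]
    exact Finset.sum_congr rfl fun j _ => by
      rw [Matrix.mul_diagonal, Matrix.transpose_apply]
  have expand : minner (U * diagonal d * Vᵀ) G
      = ∑ j, d j * ((fun a => U a j) ⬝ᵥ (G *ᵥ (fun b => V b j))) := by
    unfold minner
    calc ∑ a, ∑ b, (U * diagonal d * Vᵀ) a b * G a b
        = ∑ a, ∑ b, ∑ j, U a j * d j * V b j * G a b := by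
          refine Finset.sum_congr rfl fun a _ => Finset.sum_congr rfl fun b _ => ?_
          rw [h1, Finset.sum_mul]
      _ = ∑ j, ∑ a, ∑ b, U a j * d j * V b j * G a b := sum_comm3 _
      _ = ∑ j, d j * ((fun a => U a j) ⬝ᵥ (G *ᵥ (fun b => V b j))) := by
          refine Finset.sum_congr rfl fun j _ => ?_
          simp only [dotProduct, mulVec, Finset.mul_sum]
          exact Finset.sum_congr rfl fun a _ => Finset.sum_congr rfl fun b _ => by ring
  rw [expand, Finset.mul_sum]
  refine Finset.sum_le_sum fun j _ => ?_
  have hu : (fun a => U a j) ⬝ᵥ (fun a => U a j) = 1 := by simpa using col_dot U hU j j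
  have hv : (fun b => V b j) ⬝ᵥ (fun b => V b j) = 1 := by simpa using col_dot V hV j j
  have hb : (fun a => U a j) ⬝ᵥ (G *ᵥ (fun b => V b j)) ≤ t := by
    have h4 := hG (fun b => V b j)
    rw [hv, mul_one] at h4
    calc (fun a => U a j) ⬝ᵥ (G *ᵥ (fun b => V b j))
        ≤ Real.sqrt ((fun a => U a j) ⬝ᵥ (fun a => U a j)) *
          Real.sqrt ((G *ᵥ (fun b => V b j)) ⬝ᵥ (G *ᵥ (fun b => V b j))) := dot_cs _ _
      _ ≤ 1 * Real.sqrt (t ^ 2) := by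
          rw [hu, Real.sqrt_one]
          exact mul_le_mul_of_nonneg_left (Real.sqrt_le_sqrt h4) zero_le_one
      _ = t := by rw [one_mul, Real.sqrt_sq ht]
  calc d j * ((fun a => U a j) ⬝ᵥ (G *ᵥ (fun b => V b j)))
      ≤ d j * t := mul_le_mul_of_nonneg_left hb (hd j)
    _ = t * d j := mul_comm _ _

/-- `U diag(c) Vᵀ` is a `t`-contraction if `|c| ≤ t`. -/
lemma lemD {n₁ n₂ k : ℕ} (U : Matrix (Fin n₁) (Fin k) ℝ) (V : Matrix (Fin n₂) (Fin k) ℝ)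
    (hU : Uᵀ * U = 1) (hV : Vᵀ * V = 1) (c : Fin k → ℝ) (t : ℝ)
    (hc : ∀ j, |c j| ≤ t) (v : Fin n₂ → ℝ) :
    ((U * diagonal c * Vᵀ) *ᵥ v) ⬝ᵥ ((U * diagonal c * Vᵀ) *ᵥ v) ≤ t ^ 2 * (v ⬝ᵥ v) := by
  simp only [← mulVec_mulVec]
  rw [dot_mulVec_self U hU]
  set q := Vᵀ *ᵥ v with hqdef
  have he : ∀ i, (diagonal c *ᵥ q) i = c i * q i := fun i => by simp [mulVec_diagonal]
  have h1 : (diagonal c *ᵥ q) ⬝ᵥ (diagonal c *ᵥ q) ≤ t ^ 2 * (q ⬝ᵥ q) := by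
    calc (diagonal c *ᵥ q) ⬝ᵥ (diagonal c *ᵥ q)
        = ∑ i, (c i * q i) * (c i * q i) := by simp only [dotProduct, he]
      _ ≤ ∑ i, t ^ 2 * (q i * q i) := by
          refine Finset.sum_le_sum fun i _ => ?_
          have hcc : c i * c i ≤ t * t := by
            have h5 := mul_self_le_mul_self (abs_nonneg (c i)) (hc i)
            rwa [abs_mul_abs_self] at h5
          nlinarith [mul_self_nonneg (q i)]
      _ = t ^ 2 * (q ⬝ᵥ q) := by rw [dotProduct, Finset.mul_sum]
  have h2 : q ⬝ᵥ q ≤ v ⬝ᵥ v := transpose_contract V hV v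
  calc (diagonal c *ᵥ q) ⬝ᵥ (diagonal c *ᵥ q) ≤ t ^ 2 * (q ⬝ᵥ q) := h1
    _ ≤ t ^ 2 * (v ⬝ᵥ v) := mul_le_mul_of_nonneg_left h2 (sq_nonneg t)

/-- Inner product of two matrices with the same orthonormal factors. -/
lemma lemE {n₁ n₂ k : ℕ} (U : Matrix (Fin n₁) (Fin k) ℝ) (V : Matrix (Fin n₂) (Fin k) ℝ)
    (hU : Uᵀ * U = 1) (hV : Vᵀ * V = 1) (d m : Fin k → ℝ) :
    minner (U * diagonal d * Vᵀ) (U * diagonal m * Vᵀ) = ∑ j, d j * m j := by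
  rw [minner_eq_trace]
  have hAT : (U * diagonal d * Vᵀ)ᵀ = V * diagonal d * Uᵀ := by
    rw [Matrix.transpose_mul, Matrix.transpose_mul, Matrix.transpose_transpose,
      Matrix.diagonal_transpose, ← Matrix.mul_assoc]
  rw [hAT]
  have step : (V * diagonal d * Uᵀ) * (U * diagonal m * Vᵀ)
      = (V * diagonal (fun j => d j * m j)) * Vᵀ := by
    calc (V * diagonal d * Uᵀ) * (U * diagonal m * Vᵀ)
        = V * diagonal d * (Uᵀ * U) * (diagonal m * Vᵀ) := by
          simp only [Matrix.mul_assoc]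
      _ = V * diagonal d * (diagonal m * Vᵀ) := by rw [hU, Matrix.mul_one]
      _ = (V * (diagonal d * diagonal m)) * Vᵀ := by simp only [Matrix.mul_assoc]
      _ = (V * diagonal (fun j => d j * m j)) * Vᵀ := by
          rw [diagonal_mul_diagonal]
  rw [step, trace_mul_comm, ← Matrix.mul_assoc, hV, Matrix.one_mul, trace_diagonal]

/-- Expansion of the dot product of a linear combination with itself. -/
lemma expand_dot {m N : ℕ} (β : Fin N → ℝ) (u : Fin N → Fin m → ℝ) :
    (fun a => ∑ i, β i * u i a) ⬝ᵥ (fun a => ∑ i, β i * u i a)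
      = ∑ i, ∑ j, (β i * β j) * (u i ⬝ᵥ u j) := by
  simp only [dotProduct, Finset.mul_sum, Finset.sum_mul]
  rw [Finset.sum_comm]
  refine Finset.sum_congr rfl fun i _ => ?_
  rw [Finset.sum_comm]
  exact Finset.sum_congr rfl fun j _ => Finset.sum_congr rfl fun a _ => by ring

/-- Existence of a dual certificate attaining the nuclear norm. -/
lemma lemB {n₁ n₂ : ℕ} (D : Matrix (Fin n₁) (Fin n₂) ℝ) :
    ∃ G : Matrix (Fin n₁) (Fin n₂) ℝ,
      (∀ v : Fin n₂ → ℝ, (G *ᵥ v) ⬝ᵥ (G *ᵥ v) ≤ 1 ^ 2 * (v ⬝ᵥ v)) ∧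
      nuclearNorm D = minner D G := by
  set hX := Matrix.isHermitian_conjTranspose_mul_self D with hhX
  set P : Matrix (Fin n₂) (Fin n₂) ℝ := (hX.eigenvectorUnitary : Matrix (Fin n₂) (Fin n₂) ℝ)
    with hPdef
  set lam := hX.eigenvalues with hlam
  have hPl : Pᵀ * P = 1 := by
    have := mem_unitaryGroup_iff'.mp hX.eigenvectorUnitary.2
    rw [star_eq_conjTranspose, conjTranspose_eq_transpose_of_trivial P] at this
    exact this
  have hPr : P * Pᵀ = 1 := by
    have := mem_unitaryGroup_iff.mp hX.eigenvectorUnitary.2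
    rw [star_eq_conjTranspose, conjTranspose_eq_transpose_of_trivial P] at this
    exact this
  have hspec : Dᵀ * D = P * diagonal lam * Pᵀ := by
    have := hX.spectral_theorem
    rw [Unitary.conjStarAlgAut_apply, star_eq_conjTranspose,
      conjTranspose_eq_transpose_of_trivial P] at this
    rw [← conjTranspose_eq_transpose_of_trivial D]
    exact this
  have hlamnn : ∀ i, 0 ≤ lam i := fun i =>
    Matrix.eigenvalues_conjTranspose_mul_self_nonneg D i
  have h2 : (Dᵀ * D) * P = P * diagonal lam := by
    rw [hspec, Matrix.mul_assoc, hPl, Matrix.mul_one]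
  have heig : ∀ i, (Dᵀ * D) *ᵥ (fun b => P b i) = fun b => lam i * P b i := by
    intro i
    funext a
    have h3 := congrFun (congrFun h2 a) i
    rw [Matrix.mul_diagonal] at h3
    show ((Dᵀ * D) *ᵥ fun b => P b i) a = _
    simp only [mulVec, dotProduct] at h3 ⊢
    rw [Matrix.mul_apply] at h3
    rw [h3, mul_comm]
  have hcol := col_dot P hPl
  have horth : ∀ i j, (D *ᵥ (fun b => P b i)) ⬝ᵥ (D *ᵥ (fun b => P b j))
      = if i = j then lam i else 0 := by
    intro i j
    rw [mulVec_dot, heig j]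
    have hcc := hcol i j
    calc (fun b => P b i) ⬝ᵥ (fun b => lam j * P b j)
        = ∑ b, P b i * (lam j * P b j) := rfl
      _ = lam j * ∑ b, P b i * P b j := by
          rw [Finset.mul_sum]; exact Finset.sum_congr rfl fun b _ => by ring
      _ = lam j * ((fun a => P a i) ⬝ᵥ (fun a => P a j)) := rfl
      _ = if i = j then lam i else 0 := by
          rw [hcc]
          by_cases h : i = j
          · subst h; simp
          · simp [h]
  set s : Fin n₂ → ℝ := fun i => Real.sqrt (lam i) with hs
  set w : Fin n₂ → ℝ := fun i => if lam i = 0 then 0 else (s i)⁻¹ with hw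
  have hseq : ∀ i, s i ^ 2 = lam i := fun i => Real.sq_sqrt (hlamnn i)
  refine ⟨Matrix.of fun a b => ∑ i, w i * ((D *ᵥ (fun b' => P b' i)) a * P b i), ?_, ?_⟩
  · -- contraction
    intro v
    have hGv : (Matrix.of fun a b => ∑ i, w i * ((D *ᵥ (fun b' => P b' i)) a * P b i)) *ᵥ v
        = fun a => ∑ i, (w i * ((fun b => P b i) ⬝ᵥ v)) * (D *ᵥ (fun b' => P b' i)) a := by
      funext a
      show ∑ b, (∑ i, w i * ((D *ᵥ (fun b' => P b' i)) a * P b i)) * v b = _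
      calc ∑ b, (∑ i, w i * ((D *ᵥ (fun b' => P b' i)) a * P b i)) * v b
          = ∑ b, ∑ i, (w i * ((D *ᵥ (fun b' => P b' i)) a * P b i)) * v b := by
            exact Finset.sum_congr rfl fun b _ => by rw [Finset.sum_mul]
        _ = ∑ i, ∑ b, (w i * ((D *ᵥ (fun b' => P b' i)) a * P b i)) * v b :=
            Finset.sum_comm
        _ = ∑ i, (w i * ((fun b => P b i) ⬝ᵥ v)) * (D *ᵥ (fun b' => P b' i)) a := by
            refine Finset.sum_congr rfl fun i _ => ?_
            simp only [dotProduct, Finset.mul_sum, Finset.sum_mul]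
            exact Finset.sum_congr rfl fun b _ => by ring
    rw [hGv]
    have hexp : (fun a => ∑ i, (w i * ((fun b => P b i) ⬝ᵥ v)) * (D *ᵥ (fun b' => P b' i)) a) ⬝ᵥ
        (fun a => ∑ i, (w i * ((fun b => P b i) ⬝ᵥ v)) * (D *ᵥ (fun b' => P b' i)) a)
        = ∑ i, ∑ j, ((w i * ((fun b => P b i) ⬝ᵥ v)) * (w j * ((fun b => P b j) ⬝ᵥ v))) *
            ((D *ᵥ (fun b' => P b' i)) ⬝ᵥ (D *ᵥ (fun b' => P b' j))) :=
      expand_dot (fun i => w i * ((fun b => P b i) ⬝ᵥ v)) (fun i => D *ᵥ (fun b' => P b' i))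
    rw [hexp]
    have hdiag : ∀ i, ∑ j, ((w i * ((fun b => P b i) ⬝ᵥ v)) * (w j * ((fun b => P b j) ⬝ᵥ v))) *
        ((D *ᵥ (fun b' => P b' i)) ⬝ᵥ (D *ᵥ (fun b' => P b' j)))
        = ((w i * ((fun b => P b i) ⬝ᵥ v)) * (w i * ((fun b => P b i) ⬝ᵥ v))) * lam i := by
      intro i
      rw [Finset.sum_eq_single i]
      · rw [horth i i, if_pos rfl]
      · intro j _ hj
        rw [horth i j, if_neg (fun h => hj h.symm), mul_zero]
      · intro h; exact absurd (Finset.mem_univ i) h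
    rw [Finset.sum_congr rfl fun i _ => hdiag i]
    have hbound : ∀ i, ((w i * ((fun b => P b i) ⬝ᵥ v)) * (w i * ((fun b => P b i) ⬝ᵥ v))) * lam i
        ≤ ((fun b => P b i) ⬝ᵥ v) ^ 2 := by
      intro i
      by_cases h0 : lam i = 0
      · simp only [hw, h0, if_pos]
        simp [sq_nonneg]
      · have hlpos : 0 < lam i := lt_of_le_of_ne (hlamnn i) (Ne.symm h0)
        have hspos : 0 < s i := Real.sqrt_pos.mpr hlpos
        have hne0 : s i ≠ 0 := ne_of_gt hspos
        have hwi : w i = (s i)⁻¹ := by simp [hw, h0]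
        rw [hwi, ← hseq i]
        have heq : (s i)⁻¹ * ((fun b => P b i) ⬝ᵥ v) * ((s i)⁻¹ * ((fun b => P b i) ⬝ᵥ v)) *
            s i ^ 2 = ((fun b => P b i) ⬝ᵥ v) ^ 2 := by
          field_simp
          all_goals ring
        rw [heq]
    calc ∑ i, ((w i * ((fun b => P b i) ⬝ᵥ v)) * (w i * ((fun b => P b i) ⬝ᵥ v))) * lam i
        ≤ ∑ i, ((fun b => P b i) ⬝ᵥ v) ^ 2 := Finset.sum_le_sum fun i _ => hbound i
      _ = (Pᵀ *ᵥ v) ⬝ᵥ (Pᵀ *ᵥ v) := by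
          simp [dotProduct, mulVec, sq, Matrix.transpose_apply]
      _ = v ⬝ᵥ ((Pᵀᵀ * Pᵀ) *ᵥ v) := mulVec_dot Pᵀ v v
      _ = v ⬝ᵥ v := by rw [Matrix.transpose_transpose, hPr, one_mulVec]
      _ = 1 ^ 2 * (v ⬝ᵥ v) := by rw [one_pow, one_mul]
  · -- value
    have hval : minner D (Matrix.of fun a b => ∑ i, w i * ((D *ᵥ (fun b' => P b' i)) a * P b i))
        = ∑ i, w i * ((D *ᵥ (fun b' => P b' i)) ⬝ᵥ (D *ᵥ (fun b' => P b' i))) := by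
      unfold minner
      calc ∑ a, ∑ b, D a b * (∑ i, w i * ((D *ᵥ (fun b' => P b' i)) a * P b i))
          = ∑ a, ∑ b, ∑ i, w i * ((D *ᵥ (fun b' => P b' i)) a * (D a b * P b i)) := by
            refine Finset.sum_congr rfl fun a _ => Finset.sum_congr rfl fun b _ => ?_
            rw [Finset.mul_sum]
            exact Finset.sum_congr rfl fun i _ => by ring
        _ = ∑ i, ∑ a, ∑ b, w i * ((D *ᵥ (fun b' => P b' i)) a * (D a b * P b i)) :=
            sum_comm3 _
        _ = ∑ i, w i * ((D *ᵥ (fun b' => P b' i)) ⬝ᵥ (D *ᵥ (fun b' => P b' i))) := by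
            refine Finset.sum_congr rfl fun i _ => ?_
            simp only [dotProduct, mulVec, Finset.mul_sum]
            all_goals exact Finset.sum_congr rfl fun a _ =>
              Finset.sum_congr rfl fun b _ => by ring
    rw [hval]
    have : ∀ i, w i * ((D *ᵥ (fun b' => P b' i)) ⬝ᵥ (D *ᵥ (fun b' => P b' i))) = s i := by
      intro i
      rw [horth i i, if_pos rfl]
      by_cases h0 : lam i = 0
      · simp [hw, hs, h0]
      · have hlpos : 0 < lam i := lt_of_le_of_ne (hlamnn i) (Ne.symm h0)
        have hspos : 0 < s i := Real.sqrt_pos.mpr hlpos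
        have hwi : w i = (s i)⁻¹ := by simp [hw, h0]
        rw [hwi, ← hseq i]
        field_simp
        all_goals ring
    rw [Finset.sum_congr rfl fun i _ => this i]
    rfl

/-- Nuclear norm bound `‖U diag(d) Vᵀ‖_* ≤ Σ d`. -/
lemma lemB' {n₁ n₂ k : ℕ} (U : Matrix (Fin n₁) (Fin k) ℝ) (V : Matrix (Fin n₂) (Fin k) ℝ)
    (hU : Uᵀ * U = 1) (hV : Vᵀ * V = 1) (d : Fin k → ℝ) (hd : ∀ j, 0 ≤ d j) :
    nuclearNorm (U * diagonal d * Vᵀ) ≤ ∑ j, d j := by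
  obtain ⟨G, hG, hEq⟩ := lemB (U * diagonal d * Vᵀ)
  rw [hEq]
  have := lemC U V hU hV d hd G 1 zero_le_one hG
  simpa using this

lemma frobSq_add {n₁ n₂ : ℕ} (A B : Matrix (Fin n₁) (Fin n₂) ℝ) :
    frobSq (A + B) = frobSq A + 2 * minner A B + frobSq B := by
  unfold frobSq minner
  have h : ∀ i j, (A i j + B i j) ^ 2
      = A i j ^ 2 + 2 * (A i j * B i j) + B i j ^ 2 := fun i j => by ring
  simp only [Matrix.add_apply, h, Finset.sum_add_distrib, Finset.mul_sum]

lemma frobSq_pos {n₁ n₂ : ℕ} (A : Matrix (Fin n₁) (Fin n₂) ℝ) (h : A ≠ 0) :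
    0 < frobSq A := by
  have hex : ∃ a b, A a b ≠ 0 := by
    by_contra hc
    push_neg at hc
    exact h (by ext a b; simp [hc])
  obtain ⟨a, b, hab⟩ := hex
  unfold frobSq
  calc (0 : ℝ) < A a b ^ 2 := by positivity
    _ ≤ ∑ j, A a j ^ 2 :=
        Finset.single_le_sum (f := fun j => A a j ^ 2) (fun j _ => sq_nonneg _)
          (Finset.mem_univ b)
    _ ≤ ∑ i, ∑ j, A i j ^ 2 :=
        Finset.single_le_sum (f := fun i => ∑ j, A i j ^ 2)
          (fun i _ => Finset.sum_nonneg fun j _ => sq_nonneg _) (Finset.mem_univ a)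

end SVTAux

open SVTAux in
/-- Singular value thresholding: `D_τ(Z)` is the unique minimizer of
`X ↦ τ‖X‖_* + (1/2)‖X − Z‖_F²`. -/
theorem svt_is_unique_minimizer (n₁ n₂ k : ℕ) (Z : Matrix (Fin n₁) (Fin n₂) ℝ)
    (U : Matrix (Fin n₁) (Fin k) ℝ) (V : Matrix (Fin n₂) (Fin k) ℝ) (σ : Fin k → ℝ)
    (hU : Uᵀ * U = 1) (hV : Vᵀ * V = 1)
    (hσpos : ∀ i, 0 < σ i) (hσdec : ∀ i j : Fin k, i ≤ j → σ j ≤ σ i)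
    (hk : Z.rank = k) (hZ : Z = U * Matrix.diagonal σ * Vᵀ)
    (τ : ℝ) (hτ : 0 < τ)
    (D : Matrix (Fin n₁) (Fin n₂) ℝ)
    (hD : D = U * Matrix.diagonal (fun i => max (σ i - τ) 0) * Vᵀ) :
    ∀ X : Matrix (Fin n₁) (Fin n₂) ℝ, X ≠ D →
      τ * nuclearNorm D + (1 / 2) * frobSq (D - Z) <
        τ * nuclearNorm X + (1 / 2) * frobSq (X - Z) := by
  intro X hne
  set d : Fin k → ℝ := fun i => max (σ i - τ) 0 with hd'
  set m : Fin k → ℝ := fun i => σ i - max (σ i - τ) 0 with hm'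
  have hZD : Z - D = U * diagonal m * Vᵀ := by
    rw [hZ, hD, ← Matrix.sub_mul, ← Matrix.mul_sub]
    congr 1
    congr 1
    ext i j
    by_cases h : i = j
    · subst h; simp [Matrix.diagonal_apply, hm', hd']
    · simp [Matrix.diagonal_apply_ne _ h]
  have hm_abs : ∀ j, |m j| ≤ τ := by
    intro j
    have h1 := hσpos j
    rcases le_total (σ j - τ) 0 with h | h
    · rw [hm', abs_le]
      constructor <;> simp [max_eq_right h] <;> linarith
    · rw [hm', abs_le]
      constructor <;> simp [max_eq_left h] <;> linarith
  -- key 1 : ⟪X, Z - D⟫ ≤ τ ‖X‖_*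
  have key1 : minner X (Z - D) ≤ τ * nuclearNorm X := by
    apply lemA X (Z - D) τ hτ.le
    intro v
    rw [hZD]
    exact lemD U V hU hV m τ hm_abs v
  -- key 2 : ⟪D, Z - D⟫ = τ * Σ d
  have key2 : minner D (Z - D) = τ * ∑ j, d j := by
    rw [hZD, hD]
    rw [lemE U V hU hV d m]
    rw [Finset.mul_sum]
    refine Finset.sum_congr rfl fun j _ => ?_
    rcases le_total (σ j - τ) 0 with h | h
    · simp [hd', hm', max_eq_right h]
    · simp only [hd', hm', max_eq_left h]
      ring
  -- key 3 : ‖D‖_* ≤ Σ d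
  have key3 : nuclearNorm D ≤ ∑ j, d j := by
    rw [hD]
    exact lemB' U V hU hV d fun j => le_max_right _ _
  -- Frobenius expansion
  have hsplit : frobSq (X - Z)
      = frobSq (X - D) + 2 * minner (X - D) (D - Z) + frobSq (D - Z) := by
    rw [show X - Z = (X - D) + (D - Z) from (sub_add_sub_cancel X D Z).symm, frobSq_add]
  have m1 : minner (X - D) (D - Z) = minner D (Z - D) - minner X (Z - D) := by
    unfold SVTAux.minner
    rw [← Finset.sum_sub_distrib]
    refine Finset.sum_congr rfl fun i _ => ?_
    rw [← Finset.sum_sub_distrib]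
    refine Finset.sum_congr rfl fun j _ => ?_
    simp only [Matrix.sub_apply]
    ring
  have hF : 0 < frobSq (X - D) := frobSq_pos _ (sub_ne_zero.mpr hne)
  have hmul : τ * nuclearNorm D ≤ τ * ∑ j, d j :=
    mul_le_mul_of_nonneg_left key3 hτ.le
  linarith [hsplit, m1, key1, key2, hmul, hF]
end

section
/- Let X ∈ ℝ^{n₁×n₂} and t ∈ ℝ. Then ‖X‖_* ≤ t if and only if there exist symmetric matrices W₁ ∈ ℝ^{n₁×n₁} and W₂ ∈ ℝ^{n₂×n₂} such that tr(W₁) + tr(W₂) ≤ 2t and the block matrix [[W₁, X],[Xᵀ, W₂]] ∈ ℝ^{(n₁+n₂)×(n₁+n₂)} is positive semidefinite. -/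
open Matrix

lemma psd_trace_nonneg {n : ℕ} {A : Matrix (Fin n) (Fin n) ℝ} (hA : A.PosSemidef) :
    0 ≤ A.trace := by
  rw [Matrix.trace]
  apply Finset.sum_nonneg
  intro i _
  exact hA.diag_nonneg

/-- `‖X‖_* ≤ t` iff there exist symmetric `W₁, W₂` with `tr W₁ + tr W₂ ≤ 2t` and
`[[W₁, X], [Xᵀ, W₂]] ⪰ 0`. -/
theorem nuclearNorm_le_iff_sdp (n₁ n₂ : ℕ) (X : Matrix (Fin n₁) (Fin n₂) ℝ) (t : ℝ) :
    nuclearNorm X ≤ t ↔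
      ∃ (W₁ : Matrix (Fin n₁) (Fin n₁) ℝ) (W₂ : Matrix (Fin n₂) (Fin n₂) ℝ),
        W₁.IsSymm ∧ W₂.IsSymm ∧ W₁.trace + W₂.trace ≤ 2 * t ∧
        (Matrix.fromBlocks W₁ X Xᵀ W₂).PosSemidef := by
  classical
  have hH := Matrix.isHermitian_conjTranspose_mul_self X
  set μ : Fin n₂ → ℝ := hH.eigenvalues with hμdef
  set V : Matrix (Fin n₂) (Fin n₂) ℝ := (hH.eigenvectorUnitary : Matrix (Fin n₂) (Fin n₂) ℝ)
    with hVdef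
  have hV2 : V * Vᵀ = 1 := by
    have := (Matrix.mem_unitaryGroup_iff).mp hH.eigenvectorUnitary.2
    rw [← conjTranspose_eq_transpose_of_trivial V]
    exact this
  have hV1 : Vᵀ * V = 1 := by
    have := (Matrix.mem_unitaryGroup_iff').mp hH.eigenvectorUnitary.2
    rw [← conjTranspose_eq_transpose_of_trivial V]
    exact this
  have hdiag : Vᵀ * (Xᵀ * X) * V = diagonal μ := by
    have := hH.conjStarAlgAut_star_eigenvectorUnitary
    rw [Unitary.conjStarAlgAut_star_apply] at this
    rw [← conjTranspose_eq_transpose_of_trivial V, ← conjTranspose_eq_transpose_of_trivial X]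
    exact this
  have hPSDXX : (Xᵀ * X).PosSemidef := by
    have := Matrix.posSemidef_conjTranspose_mul_self X
    simpa [conjTranspose_eq_transpose_of_trivial] using this
  have hμ0 : ∀ i, 0 ≤ μ i := fun i => hPSDXX.eigenvalues_nonneg i
  set σ : Fin n₂ → ℝ := singularValues X with hσdef
  have hσ : ∀ i, σ i = Real.sqrt (μ i) := fun i => rfl
  have hσ0 : ∀ i, 0 ≤ σ i := fun i => Real.sqrt_nonneg _
  have hσsq : ∀ i, σ i * σ i = μ i := fun i => by
    rw [hσ]; exact Real.mul_self_sqrt (hμ0 i)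
  have hσz : ∀ i, μ i = 0 → σ i = 0 := fun i h => by rw [hσ, h, Real.sqrt_zero]
  have hσnz : ∀ i, μ i ≠ 0 → σ i ≠ 0 := by
    intro i h hc
    exact h (by rw [← hσsq i, hc, mul_zero])
  -- U
  set U : Matrix (Fin n₁) (Fin n₂) ℝ := X * V * diagonal (fun i => (σ i)⁻¹) with hUdef
  have hXVd : (X * V)ᵀ * (X * V) = diagonal μ := by
    rw [transpose_mul]
    calc Vᵀ * Xᵀ * (X * V) = Vᵀ * (Xᵀ * X) * V := by simp only [Matrix.mul_assoc]
    _ = diagonal μ := hdiag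
  have colzero : ∀ i, μ i = 0 → ∀ k, (X * V) k i = 0 := by
    intro i h k
    have hsum : ∑ k, (X * V) k i * (X * V) k i = 0 := by
      have h2 : ((X * V)ᵀ * (X * V)) i i = 0 := by rw [hXVd, diagonal_apply_eq, h]
      rw [Matrix.mul_apply] at h2
      simpa only [Matrix.transpose_apply] using h2
    have := (Finset.sum_eq_zero_iff_of_nonneg (fun k _ => mul_self_nonneg ((X * V) k i))).mp
      hsum k (Finset.mem_univ k)
    exact mul_self_eq_zero.mp this
  have collemma : ∀ f g : Fin n₂ → ℝ, (∀ i, μ i ≠ 0 → f i = g i) →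
      X * V * diagonal f = X * V * diagonal g := by
    intro f g h
    ext k i
    rw [Matrix.mul_diagonal, Matrix.mul_diagonal]
    by_cases hμi : μ i = 0
    · rw [colzero i hμi k, zero_mul, zero_mul]
    · rw [h i hμi]
  have hUS : U * diagonal σ = X * V := by
    rw [hUdef, Matrix.mul_assoc, diagonal_mul_diagonal]
    rw [collemma (fun i => (σ i)⁻¹ * σ i) (fun _ => 1)
      (fun i h => inv_mul_cancel₀ (hσnz i h))]
    simp [Matrix.diagonal_one]
  have hUSV : U * diagonal σ * Vᵀ = X := by
    rw [hUS, Matrix.mul_assoc, hV2, Matrix.mul_one]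
  have hVSU : V * diagonal σ * Uᵀ = Xᵀ := by
    rw [← hUSV]
    simp [transpose_mul, diagonal_transpose, Matrix.mul_assoc]
  set d : Fin n₂ → ℝ := fun i => (σ i)⁻¹ * μ i * (σ i)⁻¹ with hddef
  have hd1 : ∀ i, μ i ≠ 0 → d i = 1 := by
    intro i h
    have hs := hσnz i h
    simp only [hddef]
    rw [← hσsq i]
    field_simp
  have hd0 : ∀ i, μ i = 0 → d i = 0 := by
    intro i h; simp [hddef, h]
  have hUtU : Uᵀ * U = diagonal d := by
    rw [hUdef]
    rw [transpose_mul, transpose_mul, diagonal_transpose]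
    calc diagonal (fun i => (σ i)⁻¹) * (Vᵀ * Xᵀ) * (X * V * diagonal fun i => (σ i)⁻¹)
        = diagonal (fun i => (σ i)⁻¹) * (Vᵀ * (Xᵀ * X) * V) * diagonal (fun i => (σ i)⁻¹) := by
          simp only [Matrix.mul_assoc]
    _ = diagonal (fun i => (σ i)⁻¹) * diagonal μ * diagonal (fun i => (σ i)⁻¹) := by rw [hdiag]
    _ = diagonal d := by rw [diagonal_mul_diagonal, diagonal_mul_diagonal]
  have hUd : U * diagonal d = U := by
    rw [hUdef, Matrix.mul_assoc, diagonal_mul_diagonal]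
    exact collemma _ _ (fun i h => by rw [hd1 i h, mul_one])
  have hnn : nuclearNorm X = ∑ i, σ i := rfl
  constructor
  · -- forward
    intro ht
    refine ⟨U * diagonal σ * Uᵀ, V * diagonal σ * Vᵀ, ?_, ?_, ?_, ?_⟩
    · simp [Matrix.IsSymm, transpose_mul, diagonal_transpose, Matrix.mul_assoc]
    · simp [Matrix.IsSymm, transpose_mul, diagonal_transpose, Matrix.mul_assoc]
    · have h1 : (U * diagonal σ * Uᵀ).trace = ∑ i, σ i := by
        rw [trace_mul_cycle, hUtU, diagonal_mul_diagonal, trace_diagonal]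
        apply Finset.sum_congr rfl
        intro i _
        by_cases h : μ i = 0
        · rw [hd0 i h, zero_mul, hσz i h]
        · rw [hd1 i h, one_mul]
      have h2 : (V * diagonal σ * Vᵀ).trace = ∑ i, σ i := by
        rw [trace_mul_cycle, hV1, Matrix.one_mul, trace_diagonal]
      rw [h1, h2, ← hnn]
      linarith
    · have hblocks : fromBlocks (U * diagonal σ * Uᵀ) X Xᵀ (V * diagonal σ * Vᵀ)
          = fromRows U V * diagonal σ * (fromRows U V)ᵀ := by
        rw [transpose_fromRows, fromRows_mul, fromRows_mul_fromCols, hUSV, hVSU]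
      rw [hblocks]
      have hS : (diagonal σ).PosSemidef := posSemidef_diagonal_iff.mpr hσ0
      have := hS.mul_mul_conjTranspose_same (fromRows U V)
      simpa [conjTranspose_eq_transpose_of_trivial] using this
  · -- backward
    rintro ⟨W₁, W₂, hs₁, hs₂, htr, hM⟩
    have hW₁psd : W₁.PosSemidef := by
      have := hM.submatrix (Sum.inl : Fin n₁ → Fin n₁ ⊕ Fin n₂)
      have he : (fromBlocks W₁ X Xᵀ W₂).submatrix Sum.inl Sum.inl = W₁ := by
        ext i j; simp [Matrix.submatrix_apply]
      rwa [he] at this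
    set Z : Matrix (Fin n₁ ⊕ Fin n₂) (Fin n₂) ℝ := fromRows U (-V) with hZdef
    have hZpsd : (Zᵀ * fromBlocks W₁ X Xᵀ W₂ * Z).PosSemidef := by
      have := hM.conjTranspose_mul_mul_same Z
      simpa [conjTranspose_eq_transpose_of_trivial] using this
    have hZexp : Zᵀ * fromBlocks W₁ X Xᵀ W₂ * Z
        = Uᵀ * W₁ * U - Vᵀ * Xᵀ * U - Uᵀ * X * V + Vᵀ * W₂ * V := by
      rw [hZdef, transpose_fromRows, fromCols_mul_fromBlocks, fromCols_mul_fromRows]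
      simp only [transpose_neg, Matrix.neg_mul, Matrix.mul_neg, neg_neg, Matrix.add_mul]
      abel
    have hXV : Uᵀ * X * V = diagonal (fun i => (σ i)⁻¹ * μ i) := by
      rw [hUdef, transpose_mul, transpose_mul, diagonal_transpose]
      calc diagonal (fun i => (σ i)⁻¹) * (Vᵀ * Xᵀ) * X * V
          = diagonal (fun i => (σ i)⁻¹) * (Vᵀ * (Xᵀ * X) * V) := by
            simp only [Matrix.mul_assoc]
      _ = diagonal (fun i => (σ i)⁻¹) * diagonal μ := by rw [hdiag]
      _ = diagonal (fun i => (σ i)⁻¹ * μ i) := by rw [diagonal_mul_diagonal]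
    have htrXV : (Uᵀ * X * V).trace = ∑ i, σ i := by
      rw [hXV, trace_diagonal]
      apply Finset.sum_congr rfl
      intro i _
      by_cases h : μ i = 0
      · rw [h, mul_zero, hσz i h]
      · rw [← hσsq i, ← mul_assoc, inv_mul_cancel₀ (hσnz i h), one_mul]
    have htrXV' : (Vᵀ * Xᵀ * U).trace = ∑ i, σ i := by
      rw [← htrXV, ← Matrix.trace_transpose (Vᵀ * Xᵀ * U)]
      congr 1
      simp [transpose_mul, Matrix.mul_assoc]
    have htrW₂ : (Vᵀ * W₂ * V).trace = W₂.trace := by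
      rw [trace_mul_cycle, hV2, Matrix.one_mul]
    have htrW₁ : (Uᵀ * W₁ * U).trace ≤ W₁.trace := by
      set P : Matrix (Fin n₁) (Fin n₁) ℝ := U * Uᵀ with hPdef
      have hPP : P * P = P := by
        rw [hPdef]
        calc U * Uᵀ * (U * Uᵀ) = U * (Uᵀ * U) * Uᵀ := by simp only [Matrix.mul_assoc]
        _ = U * diagonal d * Uᵀ := by rw [hUtU]
        _ = U * Uᵀ := by rw [hUd]
      have hPt : Pᵀ = P := by rw [hPdef, transpose_mul, transpose_transpose]
      set Q : Matrix (Fin n₁) (Fin n₁) ℝ := 1 - P with hQdef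
      have hQQ : Q * Q = Q := by
        rw [hQdef, Matrix.sub_mul, Matrix.mul_sub, Matrix.mul_sub, hPP]
        simp
      have hQt : Qᵀ = Q := by rw [hQdef, transpose_sub, transpose_one, hPt]
      have hQpsd : (Q * W₁ * Q).PosSemidef := by
        have := hW₁psd.mul_mul_conjTranspose_same Q
        rwa [conjTranspose_eq_transpose_of_trivial, hQt] at this
      have h0 : 0 ≤ (Q * W₁ * Q).trace := psd_trace_nonneg hQpsd
      have heq : (Q * W₁ * Q).trace = (Q * W₁).trace := by
        rw [trace_mul_cycle, hQQ]
      have hPW : (Uᵀ * W₁ * U).trace = (P * W₁).trace := by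
        rw [hPdef, trace_mul_cycle]
      have h1 : (Q * W₁).trace = W₁.trace - (Uᵀ * W₁ * U).trace := by
        rw [hQdef, Matrix.sub_mul, trace_sub, Matrix.one_mul, hPW]
      rw [heq, h1] at h0
      linarith
    have htrZ : 0 ≤ (Uᵀ * W₁ * U).trace - (∑ i, σ i) - (∑ i, σ i) + W₂.trace := by
      have := psd_trace_nonneg hZpsd
      rw [hZexp] at this
      simpa [trace_sub, trace_add, htrXV, htrXV', htrW₂] using this
    rw [hnn]
    linarith
end

section
/- For every X ∈ ℝ^{n₁×n₂}, the set S = { (W₁, W₂) : W₁ ∈ ℝ^{n₁×n₁} symmetric, W₂ ∈ ℝ^{n₂×n₂} symmetric, [[W₁, X],[Xᵀ, W₂]] ⪰ 0 } is nonempty, and ‖X‖_* = (1/2)·inf { tr(W₁) + tr(W₂) : (W₁, W₂) ∈ S }, with the infimum attained. -/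
open Matrix

section aux

lemma psd_transpose_mul_self {m n : Type*} [Fintype m] [Fintype n]
    (A : Matrix m n ℝ) : (Aᵀ * A).PosSemidef := by
  have := Matrix.posSemidef_conjTranspose_mul_self A
  rwa [Matrix.conjTranspose_eq_transpose_of_trivial] at this

lemma psd_trace_nonneg_s4 {m : Type*} [Fintype m] [DecidableEq m] {A : Matrix m m ℝ}
    (h : A.PosSemidef) : 0 ≤ A.trace := by
  rw [Matrix.trace]
  refine Finset.sum_nonneg fun i _ => ?_
  exact h.diag_nonneg

lemma psd_trace_mul_nonneg {m : Type*} [Fintype m] [DecidableEq m]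
    {A B : Matrix m m ℝ} (hA : A.PosSemidef) (hB : B.PosSemidef) :
    0 ≤ (A * B).trace := by
  obtain ⟨S, hSH, hS⟩ : ∃ S : Matrix m m ℝ, Sᴴ = S ∧ S * S = B :=
    by open scoped MatrixOrder in exact ⟨CFC.sqrt B, (CFC.sqrt_nonneg B).posSemidef.isHermitian, CFC.sqrt_mul_sqrt_self B hB.nonneg⟩
  subst hS
  have h1 : (A * (S * S)).trace = (Sᴴ * A * S).trace := by
    rw [hSH, ← Matrix.mul_assoc, Matrix.trace_mul_cycle]
  rw [h1]
  exact psd_trace_nonneg_s4 (hA.conjTranspose_mul_mul_same S)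

lemma exists_diagonalizer (n₁ n₂ : ℕ) (X : Matrix (Fin n₁) (Fin n₂) ℝ) :
    ∃ V : Matrix (Fin n₂) (Fin n₂) ℝ, Vᵀ * V = 1 ∧ V * Vᵀ = 1 ∧
      (X * V)ᵀ * (X * V) = Matrix.diagonal (fun i => singularValues X i ^ 2) := by
  have hA := Matrix.isHermitian_conjTranspose_mul_self X
  have hPSD : (Xᵀ * X).PosSemidef := psd_transpose_mul_self X
  refine ⟨(hA.eigenvectorUnitary : Matrix (Fin n₂) (Fin n₂) ℝ), ?_, ?_, ?_⟩
  · have := (Matrix.mem_unitaryGroup_iff').mp (hA.eigenvectorUnitary).2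
    simpa [Matrix.star_eq_conjTranspose,
      Matrix.conjTranspose_eq_transpose_of_trivial] using this
  · have := (Matrix.mem_unitaryGroup_iff).mp (hA.eigenvectorUnitary).2
    simpa [Matrix.star_eq_conjTranspose,
      Matrix.conjTranspose_eq_transpose_of_trivial] using this
  · have key := hA.conjStarAlgAut_star_eigenvectorUnitary
    rw [Unitary.conjStarAlgAut_star_apply] at key
    rw [Matrix.star_eq_conjTranspose] at key
    have h1 : (X * (hA.eigenvectorUnitary : Matrix (Fin n₂) (Fin n₂) ℝ))ᵀ *
        (X * (hA.eigenvectorUnitary : Matrix (Fin n₂) (Fin n₂) ℝ)) =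
        (hA.eigenvectorUnitary : Matrix (Fin n₂) (Fin n₂) ℝ)ᵀ * (Xᵀ * X) *
          (hA.eigenvectorUnitary : Matrix (Fin n₂) (Fin n₂) ℝ) := by
      rw [Matrix.transpose_mul]
      simp only [Matrix.mul_assoc]
    rw [h1]
    refine Eq.trans key ?_
    refine congrArg Matrix.diagonal (funext fun i => ?_)
    simp only [Function.comp_apply, RCLike.ofReal_real_eq_id, id_eq]
    exact (Real.sq_sqrt (hPSD.eigenvalues_nonneg i)).symm

end aux

section main

variable {n₁ n₂ : ℕ}

lemma lower_bound (X : Matrix (Fin n₁) (Fin n₂) ℝ)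
    (W₁ : Matrix (Fin n₁) (Fin n₁) ℝ) (W₂ : Matrix (Fin n₂) (Fin n₂) ℝ)
    (hP : (Matrix.fromBlocks W₁ X Xᵀ W₂).PosSemidef) :
    2 * nuclearNorm X ≤ W₁.trace + W₂.trace := by
  obtain ⟨V, hVtV, hVVt, hD⟩ := exists_diagonalizer n₁ n₂ X
  set σ : Fin n₂ → ℝ := singularValues X with hσdef
  have hσ : ∀ i, 0 ≤ σ i := fun i => Real.sqrt_nonneg _
  set X' : Matrix (Fin n₁) (Fin n₂) ℝ := X * V with hX'
  set τ : Fin n₂ → ℝ := fun i => (σ i)⁻¹ with hτ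
  set U : Matrix (Fin n₁) (Fin n₂) ℝ := X' * Matrix.diagonal τ with hU
  -- columns of X' with σ i = 0 vanish
  have hcol : ∀ f g : Fin n₂ → ℝ, (∀ i, σ i ≠ 0 → f i = g i) →
      X' * Matrix.diagonal f = X' * Matrix.diagonal g := by
    intro f g hfg
    ext j i
    rw [Matrix.mul_diagonal, Matrix.mul_diagonal]
    rcases eq_or_ne (σ i) 0 with h0 | h0
    · have hz : X' j i = 0 := by
        have hii : (X'ᵀ * X') i i = 0 := by rw [hD]; simp [h0]
        have hsum : ∑ k, X' k i ^ 2 = 0 := by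
          rw [← hii, Matrix.mul_apply]
          simp [pow_two, Matrix.transpose_apply]
        have := (Finset.sum_eq_zero_iff_of_nonneg
          (fun k _ => sq_nonneg (X' k i))).mp (by simpa using hsum) j (Finset.mem_univ j)
        exact pow_eq_zero_iff (n := 2) (by norm_num) |>.mp this
      simp [hz]
    · rw [hfg i h0]
  -- U^T U = diagonal ε  with ε ∈ {0,1}
  have hUU : Uᵀ * U = Matrix.diagonal (fun i => τ i * σ i ^ 2 * τ i) := by
    rw [hU, Matrix.transpose_mul, Matrix.diagonal_transpose]
    calc Matrix.diagonal τ * X'ᵀ * (X' * Matrix.diagonal τ)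
        = Matrix.diagonal τ * (X'ᵀ * X') * Matrix.diagonal τ := by
          simp only [Matrix.mul_assoc]
      _ = Matrix.diagonal τ * Matrix.diagonal (fun i => σ i ^ 2) * Matrix.diagonal τ := by
          rw [hD]
      _ = Matrix.diagonal (fun i => τ i * σ i ^ 2 * τ i) := by
          rw [Matrix.diagonal_mul_diagonal, Matrix.diagonal_mul_diagonal]
  -- trace (Uᵀ X V) = nuclearNorm X
  have hUXV : Uᵀ * X * V = Matrix.diagonal σ := by
    have e1 : Uᵀ * X * V = Matrix.diagonal τ * (X'ᵀ * X') := by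
      rw [hU, Matrix.transpose_mul, Matrix.diagonal_transpose, hX']
      simp only [Matrix.mul_assoc]
    rw [e1, hD, Matrix.diagonal_mul_diagonal]
    refine congrArg Matrix.diagonal (funext fun i => ?_)
    show τ i * σ i ^ 2 = σ i
    rcases eq_or_ne (σ i) 0 with h0 | h0
    · simp [hτ, h0]
    · rw [hτ, pow_two, ← mul_assoc, inv_mul_cancel₀ h0, one_mul]
  -- W₁ is PSD
  have hW₁ : W₁.PosSemidef := by
    have h := hP.mul_mul_conjTranspose_same
      (Matrix.fromCols (1 : Matrix (Fin n₁) (Fin n₁) ℝ) (0 : Matrix (Fin n₁) (Fin n₂) ℝ))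
    rw [Matrix.conjTranspose_eq_transpose_of_trivial, Matrix.transpose_fromCols,
      Matrix.fromCols_mul_fromBlocks, Matrix.fromCols_mul_fromRows] at h
    simpa using h
  -- projection 1 - U Uᵀ
  have hUdU : U * Matrix.diagonal (fun i => τ i * σ i ^ 2 * τ i) = U := by
    rw [hU, Matrix.mul_assoc, Matrix.diagonal_mul_diagonal]
    apply hcol
    intro i h0
    show τ i * (τ i * σ i ^ 2 * τ i) = τ i
    rw [hτ]
    field_simp
  have hQQ : (U * Uᵀ) * (U * Uᵀ) = U * Uᵀ := by
    calc (U * Uᵀ) * (U * Uᵀ) = U * (Uᵀ * U) * Uᵀ := by simp only [Matrix.mul_assoc]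
      _ = U * Matrix.diagonal (fun i => τ i * σ i ^ 2 * τ i) * Uᵀ := by rw [hUU]
      _ = U * Uᵀ := by rw [hUdU]
  have hPproj : ((1 : Matrix (Fin n₁) (Fin n₁) ℝ) - U * Uᵀ).PosSemidef := by
    have hsymm : (U * Uᵀ)ᵀ = U * Uᵀ := by
      rw [Matrix.transpose_mul, Matrix.transpose_transpose]
    have hfact : (1 : Matrix (Fin n₁) (Fin n₁) ℝ) - U * Uᵀ =
        ((1 : Matrix (Fin n₁) (Fin n₁) ℝ) - U * Uᵀ)ᵀ *
        ((1 : Matrix (Fin n₁) (Fin n₁) ℝ) - U * Uᵀ) := by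
      rw [Matrix.transpose_sub, Matrix.transpose_one, hsymm]
      rw [Matrix.sub_mul, Matrix.mul_sub, Matrix.mul_sub, hQQ]
      noncomm_ring
    rw [hfact]
    exact psd_transpose_mul_self _
  -- trace (Uᵀ W₁ U) ≤ trace W₁
  have htrU : (Uᵀ * W₁ * U).trace ≤ W₁.trace := by
    have h1 : (Uᵀ * W₁ * U).trace = (W₁ * (U * Uᵀ)).trace := by
      rw [Matrix.trace_mul_cycle]
      rw [Matrix.trace_mul_comm]
    have h2 : 0 ≤ (((1 : Matrix (Fin n₁) (Fin n₁) ℝ) - U * Uᵀ) * W₁).trace :=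
      psd_trace_mul_nonneg hPproj hW₁
    rw [Matrix.sub_mul, Matrix.one_mul, Matrix.trace_sub] at h2
    rw [h1, Matrix.trace_mul_comm]
    linarith
  -- main PSD combination
  set N : Matrix (Fin n₁ ⊕ Fin n₂) (Fin n₂) ℝ := Matrix.fromRows U (-V) with hN
  have hG : (Nᵀ * Matrix.fromBlocks W₁ X Xᵀ W₂ * N).PosSemidef := by
    have h := hP.conjTranspose_mul_mul_same N
    rwa [Matrix.conjTranspose_eq_transpose_of_trivial] at h
  have hGtr : 0 ≤ (Nᵀ * Matrix.fromBlocks W₁ X Xᵀ W₂ * N).trace := psd_trace_nonneg_s4 hG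
  have hGexp : Nᵀ * Matrix.fromBlocks W₁ X Xᵀ W₂ * N =
      Uᵀ * W₁ * U - Uᵀ * X * V - Vᵀ * Xᵀ * U + Vᵀ * W₂ * V := by
    rw [hN, Matrix.transpose_fromRows, Matrix.mul_assoc,
      Matrix.fromBlocks_mul_fromRows, Matrix.fromCols_mul_fromRows]
    simp only [Matrix.transpose_neg, Matrix.mul_neg, Matrix.neg_mul, Matrix.mul_add,
      Matrix.add_mul, Matrix.mul_assoc, neg_neg]
    abel
  have htrXV : (Uᵀ * X * V).trace = nuclearNorm X := by
    rw [hUXV, Matrix.trace_diagonal]; rfl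
  have htrXV' : (Vᵀ * Xᵀ * U).trace = nuclearNorm X := by
    have e : Vᵀ * Xᵀ * U = (Uᵀ * X * V)ᵀ := by
      simp [Matrix.transpose_mul, Matrix.mul_assoc]
    rw [e, Matrix.trace_transpose, htrXV]
  have htrW₂ : (Vᵀ * W₂ * V).trace = W₂.trace := by
    rw [Matrix.trace_mul_cycle, hVVt, Matrix.one_mul]
  rw [hGexp, Matrix.trace_add, Matrix.trace_sub, Matrix.trace_sub,
    htrXV, htrXV', htrW₂] at hGtr
  linarith

lemma upper_bound (X : Matrix (Fin n₁) (Fin n₂) ℝ) :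
    ∃ (W₁ : Matrix (Fin n₁) (Fin n₁) ℝ) (W₂ : Matrix (Fin n₂) (Fin n₂) ℝ),
      W₁.IsSymm ∧ W₂.IsSymm ∧ (Matrix.fromBlocks W₁ X Xᵀ W₂).PosSemidef ∧
      W₁.trace + W₂.trace = 2 * nuclearNorm X := by
  obtain ⟨V, hVtV, hVVt, hD⟩ := exists_diagonalizer n₁ n₂ X
  set σ : Fin n₂ → ℝ := singularValues X with hσdef
  have hσ : ∀ i, 0 ≤ σ i := fun i => Real.sqrt_nonneg _
  set X' : Matrix (Fin n₁) (Fin n₂) ℝ := X * V with hX'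
  set s : Fin n₂ → ℝ := fun i => Real.sqrt (σ i) with hs
  set t : Fin n₂ → ℝ := fun i => (s i)⁻¹ with ht
  set M₁ : Matrix (Fin n₂) (Fin n₁) ℝ := Matrix.diagonal t * X'ᵀ with hM₁
  set M₂ : Matrix (Fin n₂) (Fin n₂) ℝ := Matrix.diagonal s * Vᵀ with hM₂
  have hcol : ∀ f g : Fin n₂ → ℝ, (∀ i, σ i ≠ 0 → f i = g i) →
      X' * Matrix.diagonal f = X' * Matrix.diagonal g := by
    intro f g hfg
    ext j i
    rw [Matrix.mul_diagonal, Matrix.mul_diagonal]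
    rcases eq_or_ne (σ i) 0 with h0 | h0
    · have hz : X' j i = 0 := by
        have hii : (X'ᵀ * X') i i = 0 := by rw [hD]; simp [h0]
        have hsum : ∑ k, X' k i ^ 2 = 0 := by
          rw [← hii, Matrix.mul_apply]
          simp [pow_two, Matrix.transpose_apply]
        have := (Finset.sum_eq_zero_iff_of_nonneg
          (fun k _ => sq_nonneg (X' k i))).mp (by simpa using hsum) j (Finset.mem_univ j)
        exact pow_eq_zero_iff (n := 2) (by norm_num) |>.mp this
      simp [hz]
    · rw [hfg i h0]
  have hM₁T : M₁ᵀ = X' * Matrix.diagonal t := by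
    rw [hM₁, Matrix.transpose_mul, Matrix.diagonal_transpose, Matrix.transpose_transpose]
  have hM₂T : M₂ᵀ = V * Matrix.diagonal s := by
    rw [hM₂, Matrix.transpose_mul, Matrix.diagonal_transpose, Matrix.transpose_transpose]
  have hsne : ∀ i, σ i ≠ 0 → s i ≠ 0 := by
    intro i h0
    rw [hs]
    simp only [ne_eq, Real.sqrt_eq_zero (hσ i)]
    exact h0
  have hM₁M₂ : M₁ᵀ * M₂ = X := by
    have h1 : M₁ᵀ * M₂ = X' * Matrix.diagonal (fun i => t i * s i) * Vᵀ := by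
      rw [hM₁T, hM₂]
      rw [Matrix.mul_assoc, ← Matrix.mul_assoc (Matrix.diagonal t),
        Matrix.diagonal_mul_diagonal, ← Matrix.mul_assoc]
    have h2 : X' * Matrix.diagonal (fun i => t i * s i) =
        X' * Matrix.diagonal (fun _ => (1:ℝ)) :=
      hcol _ _ (fun i h0 => by
        show t i * s i = 1
        rw [ht]
        exact inv_mul_cancel₀ (hsne i h0))
    rw [h1, h2, Matrix.diagonal_one]
    erw [Matrix.mul_one]
    rw [hX', Matrix.mul_assoc, hVVt,
      Matrix.mul_one]
  have h21 : M₂ᵀ * M₁ = Xᵀ := by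
    have h := congrArg Matrix.transpose hM₁M₂
    rwa [Matrix.transpose_mul, Matrix.transpose_transpose] at h
  have hblock : Matrix.fromBlocks (M₁ᵀ * M₁) X Xᵀ (M₂ᵀ * M₂) =
      (Matrix.fromCols M₁ M₂)ᵀ * Matrix.fromCols M₁ M₂ := by
    rw [Matrix.transpose_fromCols, Matrix.fromRows_mul_fromCols, hM₁M₂, h21]
  refine ⟨M₁ᵀ * M₁, M₂ᵀ * M₂, ?_, ?_, ?_, ?_⟩
  · rw [Matrix.IsSymm, Matrix.transpose_mul, Matrix.transpose_transpose]
  · rw [Matrix.IsSymm, Matrix.transpose_mul, Matrix.transpose_transpose]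
  · rw [hblock]; exact psd_transpose_mul_self _
  · -- traces
    have htr₁ : (M₁ᵀ * M₁).trace = nuclearNorm X := by
      rw [Matrix.trace_mul_comm, hM₁T, hM₁]
      calc (Matrix.diagonal t * X'ᵀ * (X' * Matrix.diagonal t)).trace
          = (Matrix.diagonal t * (X'ᵀ * X') * Matrix.diagonal t).trace := by
            congr 1
            simp only [Matrix.mul_assoc]
        _ = (Matrix.diagonal (fun i => t i * σ i ^ 2 * t i)).trace := by
            rw [hD]
            simp only [Matrix.diagonal_mul_diagonal]
        _ = ∑ i, t i * σ i ^ 2 * t i := Matrix.trace_diagonal _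
        _ = ∑ i, σ i := by
            refine Finset.sum_congr rfl fun i _ => ?_
            rcases eq_or_ne (σ i) 0 with h0 | h0
            · simp [h0]
            · have hss : s i * s i = σ i := Real.mul_self_sqrt (hσ i)
              have hne := hsne i h0
              rw [ht]
              field_simp
              nlinarith [hss]
        _ = nuclearNorm X := rfl
    have htr₂ : (M₂ᵀ * M₂).trace = nuclearNorm X := by
      rw [hM₂T, hM₂]
      calc (V * Matrix.diagonal s * (Matrix.diagonal s * Vᵀ)).trace
          = (V * Matrix.diagonal (fun i => s i * s i) * Vᵀ).trace := by
            congr 1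
            rw [Matrix.mul_assoc, ← Matrix.mul_assoc (Matrix.diagonal s),
              Matrix.diagonal_mul_diagonal, ← Matrix.mul_assoc]
        _ = (Matrix.diagonal (fun i => s i * s i) * (Vᵀ * V)).trace := by
            rw [Matrix.trace_mul_cycle, Matrix.trace_mul_comm]
        _ = ∑ i, s i * s i := by rw [hVtV, Matrix.mul_one, Matrix.trace_diagonal]
        _ = ∑ i, σ i := by
            refine Finset.sum_congr rfl fun i _ => ?_
            exact Real.mul_self_sqrt (hσ i)
        _ = nuclearNorm X := rfl
    rw [htr₁, htr₂]; ring

end main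

/-- The set of pairs of symmetric matrices `(W₁, W₂)` with `[[W₁, X],[Xᵀ, W₂]] ⪰ 0`
is nonempty and `‖X‖_* = (1/2)·inf { tr W₁ + tr W₂ }`, the infimum being attained. -/
theorem nuclearNorm_eq_half_inf_traces (n₁ n₂ : ℕ) (X : Matrix (Fin n₁) (Fin n₂) ℝ) :
    (∃ (W₁ : Matrix (Fin n₁) (Fin n₁) ℝ) (W₂ : Matrix (Fin n₂) (Fin n₂) ℝ),
        W₁.IsSymm ∧ W₂.IsSymm ∧ (Matrix.fromBlocks W₁ X Xᵀ W₂).PosSemidef) ∧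
    ∃ m : ℝ,
      IsLeast { s : ℝ | ∃ (W₁ : Matrix (Fin n₁) (Fin n₁) ℝ) (W₂ : Matrix (Fin n₂) (Fin n₂) ℝ),
          W₁.IsSymm ∧ W₂.IsSymm ∧ (Matrix.fromBlocks W₁ X Xᵀ W₂).PosSemidef ∧
          s = W₁.trace + W₂.trace } m ∧
      nuclearNorm X = (1 / 2) * m := by
  obtain ⟨W₁, W₂, h1, h2, h3, h4⟩ := upper_bound X
  refine ⟨⟨W₁, W₂, h1, h2, h3⟩, 2 * nuclearNorm X, ⟨⟨W₁, W₂, h1, h2, h3, h4.symm⟩, ?_⟩, by ring⟩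
  rintro s ⟨A₁, A₂, _, _, hpsd, rfl⟩
  exact lower_bound X A₁ A₂ hpsd
end

section
/- Let D ∈ ℝ^{n×n} be symmetric with zero diagonal (d_{ii} = 0 for all i), let h = (1,…,1)ᵀ ∈ ℝⁿ, and let J = I_n − (1/n)hhᵀ. Then there exist a positive integer k and points z₁, …, z_n ∈ ℝ^k with d_{ij} = ‖z_i − z_j‖₂² for all i, j if and only if JDJ ⪯ 0, i.e., −JDJ is positive semidefinite. -/
open Matrix

private lemma aux_sum {n : ℕ} (y a : Fin n → ℝ) (hy : ∑ i, y i = 0) :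
    ∑ i, ∑ j, y i * y j * (a i - a j) ^ 2 = -2 * (∑ i, y i * a i) ^ 2 := by
  have h : ∀ i j : Fin n, y i * y j * (a i - a j) ^ 2 =
      (y i * a i ^ 2) * y j - (2 * (y i * a i)) * (y j * a j) + y i * (y j * a j ^ 2) := by
    intro i j; ring
  simp_rw [h]
  simp only [Finset.sum_add_distrib, Finset.sum_sub_distrib, ← Finset.sum_mul,
    ← Finset.mul_sum, hy]
  ring

private lemma aux_entry {n : ℕ} (D J : Matrix (Fin n) (Fin n) ℝ)
    (hJ : J = 1 - (n : ℝ)⁻¹ • Matrix.vecMulVec (fun _ => (1 : ℝ)) (fun _ => (1 : ℝ))) :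
    ∀ i j, (J * D * J) i j = D i j - (n : ℝ)⁻¹ * ∑ k, D i k - (n : ℝ)⁻¹ * ∑ k, D k j
      + (n : ℝ)⁻¹ * ((n : ℝ)⁻¹ * ∑ k, ∑ m, D k m) := by
  intro i j
  subst hJ
  simp only [Matrix.mul_apply, Matrix.sub_apply, Matrix.one_apply, Matrix.smul_apply,
    Matrix.vecMulVec_apply, smul_eq_mul, mul_one]
  simp only [sub_mul, mul_sub, Finset.sum_sub_distrib, Finset.sum_ite_eq, Finset.sum_ite_eq',
    Finset.mem_univ, if_true, ite_mul, one_mul, zero_mul, Finset.mul_sum, Finset.sum_mul,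
    mul_ite, mul_zero, mul_one]
  have h1 : ∑ x : Fin n, D i x * (n:ℝ)⁻¹ = ∑ x, (n:ℝ)⁻¹ * D i x :=
    Finset.sum_congr rfl fun _ _ => by ring
  have h2 : (∑ x : Fin n, ∑ k : Fin n, (n:ℝ)⁻¹ * D k x * (n:ℝ)⁻¹)
      = ∑ x : Fin n, ∑ k : Fin n, (n:ℝ)⁻¹ * ((n:ℝ)⁻¹ * D x k) := by
    rw [Finset.sum_comm]
    exact Finset.sum_congr rfl fun _ _ => Finset.sum_congr rfl fun _ _ => by ring
  rw [h1, h2]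
  ring


/-- Schoenberg's criterion: a symmetric matrix `D` with zero diagonal is a
Euclidean distance matrix (of points in some `ℝ^k`, `k ≥ 1`) if and only if
`J D J ⪯ 0`, where `J = I − (1/n)hhᵀ` and `h` is the all-ones vector. -/
theorem euclideanDistanceMatrix_iff_negSemidef (n : ℕ)
    (D : Matrix (Fin n) (Fin n) ℝ) (hsymm : D.IsSymm) (hdiag : ∀ i, D i i = 0)
    (J : Matrix (Fin n) (Fin n) ℝ)
    (hJ : J = 1 - (n : ℝ)⁻¹ • Matrix.vecMulVec (fun _ => (1 : ℝ)) (fun _ => (1 : ℝ))) :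
    (∃ k : ℕ, 0 < k ∧ ∃ z : Fin n → Fin k → ℝ,
        ∀ i j, D i j = ∑ l, (z i l - z j l) ^ 2) ↔
      (-(J * D * J)).PosSemidef := by
  by_cases hn : n = 0
  · subst hn
    constructor
    · intro _
      constructor
      · show _ = _
        ext i j
        exact i.elim0
      · intro x
        simp [dotProduct, Matrix.mulVec, Finsupp.sum_fintype]
    · intro _
      exact ⟨1, one_pos, fun i => i.elim0, fun i => i.elim0⟩
  · have hn' : (n : ℝ) ≠ 0 := Nat.cast_ne_zero.mpr hn
    have hJt : Jᵀ = J := by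
      rw [hJ]
      ext i j
      simp [Matrix.transpose_apply, Matrix.one_apply, Matrix.vecMulVec_apply, eq_comm]
    have hDsymm : ∀ i k, D i k = D k i := by
      intro i k
      have h := hsymm
      rw [Matrix.IsSymm] at h
      exact (congrFun (congrFun h k) i).symm ▸ rfl
    constructor
    · rintro ⟨k, -, z, hz⟩
      refine Matrix.PosSemidef.of_dotProduct_mulVec_nonneg ?_ ?_
      · show _ = _
        have ht : (-(J * D * J))ᵀ = -(J * D * J) := by
          rw [transpose_neg, transpose_mul, transpose_mul, hJt, hsymm.eq, Matrix.mul_assoc]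
        rw [Matrix.conjTranspose_eq_transpose_of_trivial]
        exact ht
      · intro x
        set y : Fin n → ℝ := J *ᵥ x with hy_def
        have hy : ∑ i, y i = 0 := by
          have hyi : ∀ i, y i = x i - (n : ℝ)⁻¹ * ∑ j, x j := by
            intro i
            simp only [hy_def, hJ, Matrix.mulVec, dotProduct, Matrix.sub_apply,
              Matrix.one_apply, Matrix.smul_apply, Matrix.vecMulVec_apply, smul_eq_mul,
              mul_one, sub_mul, ite_mul, one_mul, zero_mul, Finset.sum_sub_distrib,
              Finset.sum_ite_eq, Finset.mem_univ, if_true, Finset.mul_sum]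
          simp_rw [hyi]
          rw [Finset.sum_sub_distrib, Finset.sum_const, Finset.card_univ, Fintype.card_fin]
          simp only [nsmul_eq_mul]
          field_simp
          ring
        have key : x ⬝ᵥ ((J * D * J) *ᵥ x) = y ⬝ᵥ (D *ᵥ y) := by
          rw [Matrix.mul_assoc, ← Matrix.mulVec_mulVec, Matrix.dotProduct_mulVec x J,
            ← Matrix.mulVec_transpose, hJt, ← hy_def, Matrix.mulVec_mulVec]
        have hquad : y ⬝ᵥ (D *ᵥ y) = -2 * ∑ l, (∑ i, y i * z i l) ^ 2 := by
          calc y ⬝ᵥ (D *ᵥ y) = ∑ i, ∑ j, ∑ l, y i * y j * (z i l - z j l) ^ 2 := by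
                simp only [dotProduct, Matrix.mulVec, Finset.mul_sum]
                refine Finset.sum_congr rfl fun i _ => Finset.sum_congr rfl fun j _ => ?_
                rw [hz i j, Finset.sum_mul, Finset.mul_sum]
                exact Finset.sum_congr rfl fun l _ => by ring
            _ = ∑ i, ∑ l, ∑ j, y i * y j * (z i l - z j l) ^ 2 :=
                Finset.sum_congr rfl fun i _ => Finset.sum_comm
            _ = ∑ l, ∑ i, ∑ j, y i * y j * (z i l - z j l) ^ 2 := Finset.sum_comm
            _ = ∑ l, -2 * (∑ i, y i * z i l) ^ 2 :=
                Finset.sum_congr rfl fun l _ => aux_sum y (fun i => z i l) hy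
            _ = -2 * ∑ l, (∑ i, y i * z i l) ^ 2 := by rw [Finset.mul_sum]
        have hfin : 0 ≤ x ⬝ᵥ ((-(J * D * J)) *ᵥ x) := by
          rw [Matrix.neg_mulVec, dotProduct_neg, key, hquad]
          have : 0 ≤ ∑ l, (∑ i, y i * z i l) ^ 2 :=
            Finset.sum_nonneg fun l _ => sq_nonneg _
          nlinarith
        simpa using hfin
    · intro hpsd
      obtain ⟨B, hB⟩ : ∃ B : Matrix (Fin n) (Fin n) ℝ, -(J * D * J) = Bᴴ * B := by
        open scoped MatrixOrder in
        exact ⟨CFC.sqrt (-(J * D * J)), by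
          rw [(CFC.sqrt_nonneg _).posSemidef.1.eq, CFC.sqrt_mul_sqrt_self _ hpsd.nonneg]⟩
      have hMij : ∀ i j, (-(J * D * J)) i j = ∑ l, B l i * B l j := by
        intro i j
        rw [hB]
        simp [Matrix.mul_apply, Matrix.conjTranspose_apply]
      have hentry := aux_entry D J hJ
      have hrc : ∀ i, (∑ k, D k i) = ∑ k, D i k :=
        fun i => Finset.sum_congr rfl fun k _ => (hDsymm i k).symm
      have hkey : ∀ i j, (-(J * D * J)) i i + (-(J * D * J)) j j
          - 2 * (-(J * D * J)) i j = 2 * D i j := by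
        intro i j
        have h1 : (-(J * D * J)) i j = -(D i j - (n : ℝ)⁻¹ * ∑ k, D i k
            - (n : ℝ)⁻¹ * ∑ k, D j k
            + (n : ℝ)⁻¹ * ((n : ℝ)⁻¹ * ∑ k, ∑ m, D k m)) := by
          rw [Matrix.neg_apply, hentry i j, hrc j]
        have h2 : (-(J * D * J)) i i = -(0 - (n : ℝ)⁻¹ * ∑ k, D i k
            - (n : ℝ)⁻¹ * ∑ k, D i k
            + (n : ℝ)⁻¹ * ((n : ℝ)⁻¹ * ∑ k, ∑ m, D k m)) := by
          rw [Matrix.neg_apply, hentry i i, hrc i, hdiag i]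
        have h3 : (-(J * D * J)) j j = -(0 - (n : ℝ)⁻¹ * ∑ k, D j k
            - (n : ℝ)⁻¹ * ∑ k, D j k
            + (n : ℝ)⁻¹ * ((n : ℝ)⁻¹ * ∑ k, ∑ m, D k m)) := by
          rw [Matrix.neg_apply, hentry j j, hrc j, hdiag j]
        rw [h1, h2, h3]; ring
      refine ⟨n, Nat.pos_of_ne_zero hn, fun i l => (Real.sqrt 2)⁻¹ * B l i, fun i j => ?_⟩
      have hs2 : ((Real.sqrt 2)⁻¹) ^ 2 = 2⁻¹ := by
        rw [inv_pow, Real.sq_sqrt (by norm_num : (0:ℝ) ≤ 2)]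
      have hl : ∀ l : Fin n, ((Real.sqrt 2)⁻¹ * B l i - (Real.sqrt 2)⁻¹ * B l j) ^ 2
          = 2⁻¹ * (B l i * B l i) + 2⁻¹ * (B l j * B l j) - (B l i * B l j) := by
        intro l
        rw [show ((Real.sqrt 2)⁻¹ * B l i - (Real.sqrt 2)⁻¹ * B l j) ^ 2
          = ((Real.sqrt 2)⁻¹) ^ 2 * (B l i * B l i) + ((Real.sqrt 2)⁻¹) ^ 2 * (B l j * B l j)
            - ((Real.sqrt 2)⁻¹) ^ 2 * 2 * (B l i * B l j) from by ring, hs2]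
        ring
      simp_rw [hl]
      rw [Finset.sum_sub_distrib, Finset.sum_add_distrib, ← Finset.mul_sum, ← Finset.mul_sum,
        ← hMij, ← hMij, ← hMij]
      linarith [hkey i j]
end

section
/- Let X ∈ ℝ^{n×n} and let r be a positive integer with r ≤ n. Define the truncated nuclear norm ‖X‖_r = Σ_{i=r+1}^{n} σ_i(X). Then ‖X‖_r = ‖X‖_* − max { tr(UᵀXV) : U ∈ ℝ^{n×r}, V ∈ ℝ^{n×r}, UᵀU = VᵀV = I_r }. -/
open Matrix

/-- The singular values of `X` arranged in nonincreasing order: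
`svDesc X 0 = σ₁(X) ≥ svDesc X 1 = σ₂(X) ≥ …`. -/
noncomputable def svDesc {n₁ n₂ : ℕ} (X : Matrix (Fin n₁) (Fin n₂) ℝ) : Fin n₂ → ℝ :=
  fun i => (singularValues X ∘ Tuple.sort (singularValues X)) i.rev

/-- The truncated nuclear norm `‖X‖_r = Σ_{i=r+1}^{n} σ_i(X)` (the sum of the
`n − r` smallest singular values; indices `i` with `r ≤ i` in 0-based order). -/
noncomputable def truncatedNuclearNorm {n : ℕ} (r : ℕ) (X : Matrix (Fin n) (Fin n) ℝ) : ℝ :=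
  ∑ i ∈ Finset.univ.filter (fun i : Fin n => r ≤ (i : ℕ)), svDesc X i


open Finset in
private lemma tnn_inner_eq_dot {n : ℕ} (x y : EuclideanSpace ℝ (Fin n)) :
    (inner ℝ x y : ℝ) = (fun i => x i) ⬝ᵥ (fun i => y i) := by
  simp [PiLp.inner_apply, dotProduct, RCLike.inner_apply, mul_comm]

/-- Extend a partial orthonormal family of vectors in `ℝⁿ` to a full one. -/
private lemma tnn_exists_ext {n : ℕ} (f : Fin n → (Fin n → ℝ)) (s : Set (Fin n))
    (hf : ∀ i ∈ s, ∀ j ∈ s, f i ⬝ᵥ f j = if i = j then (1:ℝ) else 0) :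
    ∃ w : Fin n → (Fin n → ℝ),
      (∀ i j, w i ⬝ᵥ w j = if i = j then (1:ℝ) else 0) ∧ ∀ i ∈ s, w i = f i := by
  classical
  have hdim : Module.finrank ℝ (EuclideanSpace ℝ (Fin n)) = Fintype.card (Fin n) := by
    simp
  set g : Fin n → EuclideanSpace ℝ (Fin n) := fun i => (WithLp.equiv 2 _).symm (f i) with hg
  have hgapp : ∀ i k, g i k = f i k := fun i k => rfl
  have hon : Orthonormal ℝ (s.restrict g) := by
    rw [orthonormal_iff_ite]
    intro i j
    have h2 := hf i i.2 j j.2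
    show (inner ℝ (g i.1) (g j.1) : ℝ) = _
    rw [show (inner ℝ (g i.1) (g j.1) : ℝ) = f i.1 ⬝ᵥ f j.1 from tnn_inner_eq_dot _ _]
    rw [h2]
    by_cases h : (i : Fin n) = j
    · simp [h, Subtype.ext h]
    · rw [if_neg h, if_neg (fun hh => h (congrArg Subtype.val hh))]
  obtain ⟨b, hb⟩ := hon.exists_orthonormalBasis_extension_of_card_eq hdim
  refine ⟨fun i k => b i k, ?_, ?_⟩
  · intro i j
    have h3 := orthonormal_iff_ite.mp b.orthonormal i j
    rw [tnn_inner_eq_dot] at h3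
    exact h3
  · intro i hi
    funext k
    show b i k = f i k
    rw [hb i hi]
    exact hgapp i k

private lemma tnn_sv_nonneg {n₁ n₂ : ℕ} (X : Matrix (Fin n₁) (Fin n₂) ℝ) (i : Fin n₂) :
    0 ≤ singularValues X i := Real.sqrt_nonneg _

/-- A singular value decomposition, in vector form. -/
private lemma tnn_exists_svd {n : ℕ} (X : Matrix (Fin n) (Fin n) ℝ) :
    ∃ v w : Fin n → (Fin n → ℝ),
      (∀ i j, v i ⬝ᵥ v j = if i = j then (1:ℝ) else 0) ∧
      (∀ i j, w i ⬝ᵥ w j = if i = j then (1:ℝ) else 0) ∧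
      (∀ i, X *ᵥ v i = singularValues X i • w i) := by
  classical
  set hA := Matrix.isHermitian_conjTranspose_mul_self X with hhA
  set v : Fin n → (Fin n → ℝ) := fun i k => hA.eigenvectorBasis i k with hvdef
  have hv : ∀ i j, v i ⬝ᵥ v j = if i = j then (1:ℝ) else 0 := by
    intro i j
    have h := orthonormal_iff_ite.mp hA.eigenvectorBasis.orthonormal i j
    rw [tnn_inner_eq_dot] at h
    exact h
  have hgram : ∀ i j, (X *ᵥ v i) ⬝ᵥ (X *ᵥ v j) =
      if i = j then (singularValues X i)^2 else 0 := by
    intro i j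
    have hmv : (Xᴴ * X) *ᵥ v j = hA.eigenvalues j • v j := hA.mulVec_eigenvectorBasis j
    have hsq : ∀ k, (singularValues X k)^2 = hA.eigenvalues k := fun k => by
      rw [singularValues, Real.sq_sqrt (Matrix.eigenvalues_conjTranspose_mul_self_nonneg X k)]
    have hdot : (X *ᵥ v i) ⬝ᵥ (X *ᵥ v j) = v i ⬝ᵥ ((Xᴴ * X) *ᵥ v j) := by
      rw [← Matrix.mulVec_mulVec, Matrix.dotProduct_mulVec _ Xᴴ, Matrix.vecMul_conjTranspose]
      simp
    rw [hdot, hmv, dotProduct_smul, hv i j]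
    by_cases hij : i = j
    · subst hij; simp [hsq i]
    · simp [hij]
  set s : Set (Fin n) := {i | singularValues X i ≠ 0} with hs
  set f : Fin n → (Fin n → ℝ) := fun i => (singularValues X i)⁻¹ • (X *ᵥ v i) with hf
  have hfs : ∀ i ∈ s, ∀ j ∈ s, f i ⬝ᵥ f j = if i = j then (1:ℝ) else 0 := by
    intro i hi j hj
    rw [hf]
    simp only [smul_dotProduct, dotProduct_smul, hgram i j, smul_eq_mul]
    by_cases hij : i = j
    · subst hij
      rw [if_pos rfl, if_pos rfl]
      have hi' : singularValues X i ≠ 0 := hi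
      field_simp [hi']
    · simp [hij]
  obtain ⟨w, hw, hws⟩ := tnn_exists_ext f s hfs
  refine ⟨v, w, hv, hw, ?_⟩
  intro i
  by_cases hi : i ∈ s
  · rw [hws i hi, hf]
    simp only
    rw [smul_smul, mul_inv_cancel₀ hi, one_smul]
  · have h0 : singularValues X i = 0 := by simpa [hs] using hi
    have hz : (X *ᵥ v i) ⬝ᵥ (X *ᵥ v i) = 0 := by rw [hgram i i, if_pos rfl, h0]; ring
    rw [dotProduct_self_eq_zero] at hz
    rw [hz, h0, zero_smul]

/-- Parseval for an orthonormal basis of `ℝⁿ` given as `n` vectors. -/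
private lemma tnn_parseval {n : ℕ} {v : Fin n → (Fin n → ℝ)}
    (hv : ∀ i j, v i ⬝ᵥ v j = if i = j then (1:ℝ) else 0) (x y : Fin n → ℝ) :
    ∑ i, (v i ⬝ᵥ x) * (v i ⬝ᵥ y) = x ⬝ᵥ y := by
  classical
  set P : Matrix (Fin n) (Fin n) ℝ := Matrix.of (fun i j => v i j) with hP
  have hPPt : P * Pᵀ = 1 := by
    ext i j
    rw [Matrix.mul_apply, Matrix.one_apply, ← hv i j]
    rfl
  have hPtP : Pᵀ * P = 1 := mul_eq_one_comm.mp hPPt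
  have h1 : ∑ i, (v i ⬝ᵥ x) * (v i ⬝ᵥ y) = (P *ᵥ x) ⬝ᵥ (P *ᵥ y) := rfl
  rw [h1, Matrix.dotProduct_mulVec,
    show (P *ᵥ x) ᵥ* P = (Pᵀ * P) *ᵥ x by
      rw [← Matrix.transpose_transpose P, Matrix.vecMul_transpose, Matrix.transpose_transpose,
        Matrix.mulVec_mulVec],
    hPtP, Matrix.one_mulVec]

/-- Expansion in an orthonormal basis of `ℝⁿ`. -/
private lemma tnn_expand {n : ℕ} {v : Fin n → (Fin n → ℝ)}
    (hv : ∀ i j, v i ⬝ᵥ v j = if i = j then (1:ℝ) else 0) (x : Fin n → ℝ) :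
    x = ∑ i, (v i ⬝ᵥ x) • v i := by
  classical
  set P : Matrix (Fin n) (Fin n) ℝ := Matrix.of (fun i j => v i j) with hP
  have hPPt : P * Pᵀ = 1 := by
    ext i j
    rw [Matrix.mul_apply, Matrix.one_apply, ← hv i j]
    rfl
  have hPtP : Pᵀ * P = 1 := mul_eq_one_comm.mp hPPt
  have h1 : Pᵀ *ᵥ (P *ᵥ x) = x := by
    rw [Matrix.mulVec_mulVec, hPtP, Matrix.one_mulVec]
  funext k
  have h2 : (Pᵀ *ᵥ (P *ᵥ x)) k = ∑ i, v i k * (v i ⬝ᵥ x) := rfl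
  have h3 := congrFun h1 k
  rw [h2] at h3
  rw [Finset.sum_apply, ← h3]
  exact Finset.sum_congr rfl fun i _ => by rw [Pi.smul_apply, smul_eq_mul, mul_comm]

/-- Bessel's inequality for an orthonormal family of `r` vectors in `ℝⁿ`. -/
private lemma tnn_bessel {n r : ℕ} {u : Fin r → (Fin n → ℝ)}
    (hu : ∀ j k, u j ⬝ᵥ u k = if j = k then (1:ℝ) else 0) (x : Fin n → ℝ) :
    ∑ j, (u j ⬝ᵥ x)^2 ≤ x ⬝ᵥ x := by
  classical
  set Q : Matrix (Fin r) (Fin n) ℝ := Matrix.of (fun j i => u j i) with hQ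
  have hQQt : Q * Qᵀ = 1 := by
    ext j k
    rw [Matrix.mul_apply, Matrix.one_apply, ← hu j k]
    rfl
  set a : Fin r → ℝ := Q *ᵥ x with ha
  set y : Fin n → ℝ := Qᵀ *ᵥ a with hy
  have hxy : x ⬝ᵥ y = a ⬝ᵥ a := by
    rw [hy, Matrix.dotProduct_mulVec x Qᵀ a, Matrix.vecMul_transpose]
  have hyy : y ⬝ᵥ y = a ⬝ᵥ a := by
    rw [hy, Matrix.dotProduct_mulVec _ Qᵀ a, Matrix.vecMul_transpose,
      Matrix.mulVec_mulVec, hQQt, Matrix.one_mulVec]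
  have hyx : y ⬝ᵥ x = a ⬝ᵥ a := by rw [dotProduct_comm, hxy]
  have h0 : (0:ℝ) ≤ (x - y) ⬝ᵥ (x - y) :=
    Finset.sum_nonneg (fun i _ => mul_self_nonneg _)
  rw [sub_dotProduct, dotProduct_sub, dotProduct_sub] at h0
  have h1 : ∑ j, (u j ⬝ᵥ x)^2 = a ⬝ᵥ a := by
    show ∑ j, (u j ⬝ᵥ x)^2 = ∑ j, a j * a j
    refine Finset.sum_congr rfl fun j _ => ?_
    rw [pow_two]
    rfl
  rw [h1]
  linarith

open Finset in
private lemma tnn_filter_eq_map {n r : ℕ} (hrn : r ≤ n) :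
    (univ.filter fun i : Fin n => (i:ℕ) < r) = univ.map (Fin.castLEEmb hrn) := by
  ext i
  simp only [mem_filter, mem_univ, true_and, mem_map]
  constructor
  · intro hi
    refine ⟨⟨(i:ℕ), hi⟩, ?_⟩
    ext
    simp [Fin.castLEEmb]
  · rintro ⟨j, rfl⟩
    simpa [Fin.castLEEmb] using j.2

open Finset in
private lemma tnn_card_filter {n r : ℕ} (hrn : r ≤ n) :
    (univ.filter fun i : Fin n => (i:ℕ) < r).card = r := by
  rw [tnn_filter_eq_map hrn, card_map, card_univ, Fintype.card_fin]

open Finset in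
private lemma tnn_threshold {n r : ℕ} (hr : 0 < r) (hrn : r ≤ n) (g d : Fin n → ℝ)
    (hga : Antitone g) (hg0 : ∀ i, 0 ≤ g i) (hd0 : ∀ i, 0 ≤ d i) (hd1 : ∀ i, d i ≤ 1)
    (hds : ∑ i, d i ≤ (r:ℝ)) :
    ∑ i, g i * d i ≤ ∑ i ∈ univ.filter (fun i : Fin n => (i:ℕ) < r), g i := by
  have hrn' : r - 1 < n := by omega
  set k : Fin n := ⟨r - 1, hrn'⟩ with hk
  set s : ℝ := g k with hsdef
  have hs0 : 0 ≤ s := hg0 k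
  have e1 := sum_filter_add_sum_filter_not univ (fun i : Fin n => (i:ℕ) < r)
    (fun i => g i * d i)
  have e2 := sum_filter_add_sum_filter_not univ (fun i : Fin n => (i:ℕ) < r) d
  have h1 : ∑ i ∈ univ.filter (fun i : Fin n => (i:ℕ) < r), g i * d i ≤
      ∑ i ∈ univ.filter (fun i : Fin n => (i:ℕ) < r), (g i + s * (d i - 1)) := by
    apply sum_le_sum
    intro i hi
    have hir : (i:ℕ) < r := (mem_filter.mp hi).2
    have hik : i ≤ k := by
      rw [Fin.le_def]
      simp only [hk]
      omega
    have hgi : s ≤ g i := hga hik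
    nlinarith [hd1 i, hd0 i]
  have h2 : ∑ i ∈ univ.filter (fun i : Fin n => ¬ (i:ℕ) < r), g i * d i ≤
      ∑ i ∈ univ.filter (fun i : Fin n => ¬ (i:ℕ) < r), s * d i := by
    apply sum_le_sum
    intro i hi
    have hir : ¬ (i:ℕ) < r := (mem_filter.mp hi).2
    have hki : k ≤ i := by
      rw [Fin.le_def]
      simp only [hk]
      omega
    exact mul_le_mul_of_nonneg_right (hga hki) (hd0 i)
  have h3 : ∑ i ∈ univ.filter (fun i : Fin n => (i:ℕ) < r), (g i + s * (d i - 1)) =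
      (∑ i ∈ univ.filter (fun i : Fin n => (i:ℕ) < r), g i) +
      s * (∑ i ∈ univ.filter (fun i : Fin n => (i:ℕ) < r), d i) - s * r := by
    rw [sum_add_distrib, ← mul_sum, sum_sub_distrib, sum_const, tnn_card_filter hrn]
    push_cast
    ring
  have h4 : ∑ i ∈ univ.filter (fun i : Fin n => ¬ (i:ℕ) < r), s * d i =
      s * ∑ i ∈ univ.filter (fun i : Fin n => ¬ (i:ℕ) < r), d i := by
    rw [mul_sum]
  have h5 : s * (∑ i, d i) ≤ s * r := mul_le_mul_of_nonneg_left hds hs0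
  have h6 : s * (∑ i ∈ univ.filter (fun i : Fin n => (i:ℕ) < r), d i) +
      s * (∑ i ∈ univ.filter (fun i : Fin n => ¬ (i:ℕ) < r), d i) = s * (∑ i, d i) := by
    rw [← mul_add, e2]
  linarith

private lemma tnn_svDesc_eq {n₁ n₂ : ℕ} (X : Matrix (Fin n₁) (Fin n₂) ℝ) (i : Fin n₂) :
    svDesc X i = singularValues X ((Fin.revPerm.trans (Tuple.sort (singularValues X))) i) := rfl

private lemma tnn_svDesc_antitone {n₁ n₂ : ℕ} (X : Matrix (Fin n₁) (Fin n₂) ℝ) :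
    Antitone (svDesc X) := by
  intro i j hij
  exact Tuple.monotone_sort (singularValues X) (Fin.rev_le_rev.mpr hij)


private lemma tnn_sum_dotProduct {n k : ℕ} (f : Fin k → Fin n → ℝ) (x : Fin n → ℝ) :
    (∑ i, f i) ⬝ᵥ x = ∑ i, f i ⬝ᵥ x := by
  show ∑ l, (∑ i, f i) l * x l = _
  have h1 : ∀ l, (∑ i, f i) l * x l = ∑ i, f i l * x l := fun l => by
    rw [Finset.sum_apply, Finset.sum_mul]
  rw [Finset.sum_congr rfl fun l _ => h1 l, Finset.sum_comm]
  rfl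

private lemma tnn_trace_eq {n r : ℕ} (X : Matrix (Fin n) (Fin n) ℝ)
    (U V : Matrix (Fin n) (Fin r) ℝ) :
    (Uᵀ * X * V).trace = ∑ j, (fun i => U i j) ⬝ᵥ (X *ᵥ (fun i => V i j)) := by
  rw [Matrix.mul_assoc, Matrix.trace]
  refine Finset.sum_congr rfl fun j _ => ?_
  rw [Matrix.diag_apply, Matrix.mul_apply]
  refine Finset.sum_congr rfl fun i _ => ?_
  rw [Matrix.transpose_apply, Matrix.mul_apply]
  rfl

private lemma tnn_cols_on {n r : ℕ} {U : Matrix (Fin n) (Fin r) ℝ} (h : Uᵀ * U = 1) :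
    ∀ j k, (fun i => U i j) ⬝ᵥ (fun i => U i k) = if j = k then (1:ℝ) else 0 := by
  intro j k
  have h2 := congrFun (congrFun h j) k
  rw [Matrix.mul_apply, Matrix.one_apply] at h2
  exact h2

private lemma tnn_on_cols {n r : ℕ} {U : Matrix (Fin n) (Fin r) ℝ}
    (h : ∀ j k, (fun i => U i j) ⬝ᵥ (fun i => U i k) = if j = k then (1:ℝ) else 0) :
    Uᵀ * U = 1 := by
  ext j k
  rw [Matrix.mul_apply, Matrix.one_apply, ← h j k]
  rfl

/-- `‖X‖_r = ‖X‖_* − max { tr(Uᵀ X V) : Uᵀ U = Vᵀ V = I_r }`. -/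
theorem truncatedNuclearNorm_eq (n r : ℕ) (hr : 0 < r) (hrn : r ≤ n)
    (X : Matrix (Fin n) (Fin n) ℝ) :
    ∃ m : ℝ,
      IsGreatest { t : ℝ | ∃ (U : Matrix (Fin n) (Fin r) ℝ) (V : Matrix (Fin n) (Fin r) ℝ),
          Uᵀ * U = 1 ∧ Vᵀ * V = 1 ∧ t = (Uᵀ * X * V).trace } m ∧
      truncatedNuclearNorm r X = nuclearNorm X - m := by
    classical
  obtain ⟨v, w, hv, hw, hXv⟩ := tnn_exists_svd X
  set σ : Fin n → ℝ := singularValues X with hσdef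
  set ρ : Equiv.Perm (Fin n) := Fin.revPerm.trans (Tuple.sort σ) with hρdef
  have hρ : ∀ i, svDesc X i = σ (ρ i) := fun i => rfl
  set m : ℝ := ∑ i ∈ Finset.univ.filter (fun i : Fin n => (i:ℕ) < r), svDesc X i with hm
  have hσ0 : ∀ i, 0 ≤ σ i := fun i => tnn_sv_nonneg X i
  refine ⟨m, ⟨?_, ?_⟩, ?_⟩
  · -- membership: build U, V from the SVD
    set J : Fin r → Fin n := fun j => ρ (Fin.castLE hrn j) with hJ
    have hJinj : Function.Injective J := fun a b hab =>
      Fin.castLE_injective hrn (ρ.injective hab)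
    refine ⟨Matrix.of (fun i j => w (J j) i), Matrix.of (fun i j => v (J j) i), ?_, ?_, ?_⟩
    · refine tnn_on_cols fun j k => ?_
      show w (J j) ⬝ᵥ w (J k) = _
      rw [hw]
      by_cases hjk : j = k
      · simp [hjk]
      · rw [if_neg (fun h => hjk (hJinj h)), if_neg hjk]
    · refine tnn_on_cols fun j k => ?_
      show v (J j) ⬝ᵥ v (J k) = _
      rw [hv]
      by_cases hjk : j = k
      · simp [hjk]
      · rw [if_neg (fun h => hjk (hJinj h)), if_neg hjk]
    · rw [tnn_trace_eq]
      have h1 : ∀ j : Fin r, (fun i => Matrix.of (fun i j => w (J j) i) i j) ⬝ᵥ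
          (X *ᵥ fun i => Matrix.of (fun i j => v (J j) i) i j) = σ (J j) := by
        intro j
        show w (J j) ⬝ᵥ (X *ᵥ v (J j)) = σ (J j)
        rw [hXv, dotProduct_smul, hw, if_pos rfl, smul_eq_mul, mul_one]
      rw [Finset.sum_congr rfl fun j _ => h1 j]
      rw [hm, tnn_filter_eq_map hrn, Finset.sum_map]
      rfl
  · -- upper bound
    rintro t ⟨U, V, hUU, hVV, rfl⟩
    have hu : ∀ j k, (fun i => U i j) ⬝ᵥ (fun i => U i k) = if j = k then (1:ℝ) else 0 :=
      tnn_cols_on hUU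
    have hv' : ∀ j k, (fun i => V i j) ⬝ᵥ (fun i => V i k) = if j = k then (1:ℝ) else 0 :=
      tnn_cols_on hVV
    set a : Fin n → Fin r → ℝ := fun i j => v i ⬝ᵥ (fun l => V l j) with hadef
    set b : Fin n → Fin r → ℝ := fun i j => w i ⬝ᵥ (fun l => U l j) with hbdef
    have htr : (Uᵀ * X * V).trace = ∑ i, σ i * (∑ j, a i j * b i j) := by
      rw [tnn_trace_eq]
      have hstep : ∀ j : Fin r, (fun i => U i j) ⬝ᵥ (X *ᵥ fun i => V i j) =
          ∑ i, σ i * (a i j * b i j) := by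
        intro j
        have hexp : (X *ᵥ fun l => V l j) = ∑ i, (a i j * σ i) • w i := by
          conv_lhs => rw [tnn_expand hv (fun l => V l j), ← Matrix.mulVecLin_apply, map_sum]
          refine Finset.sum_congr rfl fun i _ => ?_
          rw [LinearMap.map_smul, Matrix.mulVecLin_apply, hXv i, smul_smul]
        rw [hexp, dotProduct_comm, tnn_sum_dotProduct]
        refine Finset.sum_congr rfl fun i _ => ?_
        rw [smul_dotProduct, smul_eq_mul]
        show (a i j * σ i) * b i j = σ i * (a i j * b i j)
        ring
      rw [Finset.sum_congr rfl fun j _ => hstep j, Finset.sum_comm]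
      exact Finset.sum_congr rfl fun i _ => by rw [Finset.mul_sum]
    set α : Fin n → ℝ := fun i => ∑ j, a i j ^ 2 with hαdef
    set β : Fin n → ℝ := fun i => ∑ j, b i j ^ 2 with hβdef
    have hα0 : ∀ i, 0 ≤ α i := fun i => Finset.sum_nonneg fun j _ => sq_nonneg _
    have hβ0 : ∀ i, 0 ≤ β i := fun i => Finset.sum_nonneg fun j _ => sq_nonneg _
    have hα1 : ∀ i, α i ≤ 1 := by
      intro i
      have hb := tnn_bessel hv' (v i)
      have h2 : v i ⬝ᵥ v i = 1 := by rw [hv i i, if_pos rfl]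
      rw [h2] at hb
      refine le_trans (le_of_eq ?_) hb
      exact Finset.sum_congr rfl fun j _ => by
        show (v i ⬝ᵥ fun l => V l j) ^ 2 = _
        rw [dotProduct_comm]
    have hβ1 : ∀ i, β i ≤ 1 := by
      intro i
      have hb := tnn_bessel hu (w i)
      have h2 : w i ⬝ᵥ w i = 1 := by rw [hw i i, if_pos rfl]
      rw [h2] at hb
      refine le_trans (le_of_eq ?_) hb
      exact Finset.sum_congr rfl fun j _ => by
        show (w i ⬝ᵥ fun l => U l j) ^ 2 = _
        rw [dotProduct_comm]
    have hαsum : ∑ i, α i = (r:ℝ) := by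
      rw [Finset.sum_comm]
      have h3 : ∀ j : Fin r, ∑ i, a i j ^ 2 = 1 := by
        intro j
        have hpar := tnn_parseval hv (fun l => V l j) (fun l => V l j)
        rw [hv' j j, if_pos rfl] at hpar
        rw [← hpar]
        exact Finset.sum_congr rfl fun i _ => by rw [pow_two]
      rw [Finset.sum_congr rfl fun j _ => h3 j, Finset.sum_const, Finset.card_univ,
        Fintype.card_fin, nsmul_eq_mul, mul_one]
    have hβsum : ∑ i, β i = (r:ℝ) := by
      rw [Finset.sum_comm]
      have h3 : ∀ j : Fin r, ∑ i, b i j ^ 2 = 1 := by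
        intro j
        have hpar := tnn_parseval hw (fun l => U l j) (fun l => U l j)
        rw [hu j j, if_pos rfl] at hpar
        rw [← hpar]
        exact Finset.sum_congr rfl fun i _ => by rw [pow_two]
      rw [Finset.sum_congr rfl fun j _ => h3 j, Finset.sum_const, Finset.card_univ,
        Fintype.card_fin, nsmul_eq_mul, mul_one]
    set c : Fin n → ℝ := fun i => Real.sqrt (α i) * Real.sqrt (β i) with hcdef
    have htc : ∀ i, ∑ j, a i j * b i j ≤ c i := fun i =>
      Real.sum_mul_le_sqrt_mul_sqrt _ _ _
    have hc0 : ∀ i, 0 ≤ c i := fun i => mul_nonneg (Real.sqrt_nonneg _) (Real.sqrt_nonneg _)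
    have hc1 : ∀ i, c i ≤ 1 := by
      intro i
      have h1 : Real.sqrt (α i) ≤ 1 := by
        rw [show (1:ℝ) = Real.sqrt 1 from Real.sqrt_one.symm]
        exact Real.sqrt_le_sqrt (hα1 i)
      have h2 : Real.sqrt (β i) ≤ 1 := by
        rw [show (1:ℝ) = Real.sqrt 1 from Real.sqrt_one.symm]
        exact Real.sqrt_le_sqrt (hβ1 i)
      calc c i ≤ 1 * 1 := mul_le_mul h1 h2 (Real.sqrt_nonneg _) zero_le_one
        _ = 1 := mul_one 1
    have hcsum : ∑ i, c i ≤ (r:ℝ) := by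
      have h4 := Real.sum_sqrt_mul_sqrt_le (Finset.univ) hα0 hβ0
      rw [hαsum, hβsum] at h4
      calc ∑ i, c i ≤ Real.sqrt r * Real.sqrt r := h4
        _ = (r:ℝ) := Real.mul_self_sqrt (Nat.cast_nonneg r)
    have hσtc : ∑ i, σ i * (∑ j, a i j * b i j) ≤ ∑ i, σ i * c i :=
      Finset.sum_le_sum fun i _ => mul_le_mul_of_nonneg_left (htc i) (hσ0 i)
    have hre : ∑ i, σ i * c i = ∑ i, svDesc X i * c (ρ i) :=
      (Equiv.sum_comp ρ (fun i => σ i * c i)).symm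
    have hthr := tnn_threshold hr hrn (svDesc X) (fun i => c (ρ i))
      (tnn_svDesc_antitone X) (fun i => tnn_sv_nonneg X (ρ i))
      (fun i => hc0 (ρ i)) (fun i => hc1 (ρ i))
      (by rw [Equiv.sum_comp ρ c]; exact hcsum)
    rw [htr]
    calc ∑ i, σ i * (∑ j, a i j * b i j) ≤ ∑ i, σ i * c i := hσtc
      _ = ∑ i, svDesc X i * c (ρ i) := hre
      _ ≤ m := hthr
  · -- arithmetic identity
    have hsplit := Finset.sum_filter_add_sum_filter_not Finset.univ
      (fun i : Fin n => (i:ℕ) < r) (svDesc X)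
    have hnn : nuclearNorm X = ∑ i, svDesc X i := by
      rw [nuclearNorm]
      exact (Equiv.sum_comp ρ σ).symm
    have htt : truncatedNuclearNorm r X =
        ∑ i ∈ Finset.univ.filter (fun i : Fin n => ¬ (i:ℕ) < r), svDesc X i := by
      rw [truncatedNuclearNorm]
      refine Finset.sum_congr ?_ fun _ _ => rfl
      ext i
      simp [not_lt]
    rw [htt, hnn]
    linarith [hsplit]
end

section
/- Let C = { X ∈ ℝ^{n₁×n₂} : ‖X‖ ≤ 1 } be the unit ball of the spectral norm. If g : ℝ^{n₁×n₂} → ℝ is convex on C and satisfies g(X) ≤ rank(X) for all X ∈ C, then g(X) ≤ ‖X‖_* for all X ∈ C. In other words, the nuclear norm is the largest convex function on C that lower-bounds the rank function, i.e., it is the convex envelope of the rank on C. -/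
open Matrix

/-- The spectral norm: the largest singular value. -/
noncomputable def matSpectralNorm {n₁ n₂ : ℕ} (X : Matrix (Fin n₁) (Fin n₂) ℝ) : ℝ :=
  ⨆ i, singularValues X i

section aux
variable {n : ℕ}

lemma dp_self_pos {n : ℕ} {v : Fin n → ℝ} (hv : v ≠ 0) : 0 < v ⬝ᵥ v := by
  rcases Function.ne_iff.mp hv with ⟨j, hj⟩
  simp only [Pi.zero_apply] at hj
  rw [dotProduct]
  exact Finset.sum_pos' (fun k _ => mul_self_nonneg _) ⟨j, Finset.mem_univ j, mul_self_pos.2 hj⟩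

lemma eig_le_one_of_psd {A : Matrix (Fin n) (Fin n) ℝ} (hA : A.IsHermitian)
    (h : ((1 : Matrix (Fin n) (Fin n) ℝ) - A).PosSemidef) (i : Fin n) :
    hA.eigenvalues i ≤ 1 := by
  set v : Fin n → ℝ := ⇑(hA.eigenvectorBasis i) with hvdef
  have hv : A *ᵥ v = hA.eigenvalues i • v := hA.mulVec_eigenvectorBasis i
  have hvne : v ≠ 0 := by
    have := hA.eigenvectorBasis.orthonormal.ne_zero i
    intro hc
    exact this (by ext j; exact congrFun hc j)
  have hpos : 0 < v ⬝ᵥ v := dp_self_pos hvne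
  have h2 := h.dotProduct_mulVec_nonneg v
  have h3 : (1 - A) *ᵥ v = v - hA.eigenvalues i • v := by
    rw [sub_mulVec, one_mulVec, hv]
  rw [h3] at h2
  simp only [star_trivial, dotProduct_sub, dotProduct_smul, smul_eq_mul, RCLike.re_to_real] at h2
  nlinarith

lemma psd_conj (U : Matrix (Fin n) (Fin n) ℝ) {d : Fin n → ℝ} (hd : ∀ i, 0 ≤ d i) :
    (U * diagonal d * star U).PosSemidef := by
  have := (Matrix.PosSemidef.diagonal (R := ℝ) (n := Fin n) hd).mul_mul_conjTranspose_same U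
  simpa [Matrix.star_eq_conjTranspose] using this

lemma spectral_real {A : Matrix (Fin n) (Fin n) ℝ} (hA : A.IsHermitian) :
    A = (hA.eigenvectorUnitary : Matrix (Fin n) (Fin n) ℝ) * diagonal hA.eigenvalues *
      star (hA.eigenvectorUnitary : Matrix (Fin n) (Fin n) ℝ) := by
  simpa using hA.spectral_theorem

lemma psd_one_sub {A : Matrix (Fin n) (Fin n) ℝ} (hA : A.IsHermitian)
    (h : ∀ i, hA.eigenvalues i ≤ 1) :
    ((1 : Matrix (Fin n) (Fin n) ℝ) - A).PosSemidef := by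
  set U := (hA.eigenvectorUnitary : Matrix (Fin n) (Fin n) ℝ) with hU
  have hUU : U * star U = 1 := Unitary.mul_star_self_of_mem hA.eigenvectorUnitary.2
  have key : (1 : Matrix (Fin n) (Fin n) ℝ) - A =
      U * diagonal (fun i => 1 - hA.eigenvalues i) * star U := by
    have hd : diagonal (fun i => 1 - hA.eigenvalues i) =
        1 - diagonal hA.eigenvalues := by
      rw [← diagonal_one, ← diagonal_sub]
    rw [hd, Matrix.mul_sub, mul_one, Matrix.sub_mul, hUU, ← spectral_real hA]
  rw [key]
  exact psd_conj U (fun i => by linarith [h i])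

lemma psd_smul {A : Matrix (Fin n) (Fin n) ℝ} (hA : A.PosSemidef) {c : ℝ} (hc : 0 ≤ c) :
    (c • A).PosSemidef := by
  refine PosSemidef.of_dotProduct_mulVec_nonneg (by show _ = _; rw [conjTranspose_smul, star_trivial, hA.1]) fun x => ?_
  have := hA.dotProduct_mulVec_nonneg x
  simp only [smul_mulVec, dotProduct_smul, smul_eq_mul] at *
  exact mul_nonneg hc this

end aux

lemma spectralNorm_le_one_iff {n₁ n₂ : ℕ} (X : Matrix (Fin n₁) (Fin n₂) ℝ) :
    matSpectralNorm X ≤ 1 ↔ ((1 : Matrix (Fin n₂) (Fin n₂) ℝ) - Xᴴ * X).PosSemidef := by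
  have hμ0 : ∀ i, 0 ≤ (Matrix.isHermitian_conjTranspose_mul_self X).eigenvalues i :=
    fun i => (posSemidef_conjTranspose_mul_self X).eigenvalues_nonneg i
  constructor
  · intro h
    apply psd_one_sub (Matrix.isHermitian_conjTranspose_mul_self X)
    intro i
    have h1 : singularValues X i ≤ 1 := by
      refine le_trans ?_ h
      rw [matSpectralNorm]
      exact le_ciSup (Set.Finite.bddAbove (Set.finite_range (singularValues X))) i
    rw [singularValues] at h1
    have h2 := Real.sq_sqrt (hμ0 i)
    nlinarith [Real.sqrt_nonneg ((Matrix.isHermitian_conjTranspose_mul_self X).eigenvalues i)]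
  · intro h
    apply Real.iSup_le _ zero_le_one
    intro i
    exact Real.sqrt_le_one.mpr (eig_le_one_of_psd _ h i)

lemma convex_specBall {n₁ n₂ : ℕ} :
    Convex ℝ {M : Matrix (Fin n₁) (Fin n₂) ℝ | matSpectralNorm M ≤ 1} := by
  intro A hA B hB t s ht hs hts
  simp only [Set.mem_setOf_eq, spectralNorm_le_one_iff] at hA hB ⊢
  have hs' : s = 1 - t := by linarith
  subst hs'
  have key : (1 : Matrix (Fin n₂) (Fin n₂) ℝ) - (t • A + (1-t) • B)ᴴ * (t • A + (1-t) • B) =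
      t • ((1 : Matrix (Fin n₂) (Fin n₂) ℝ) - Aᴴ * A) +
      (1-t) • ((1 : Matrix (Fin n₂) (Fin n₂) ℝ) - Bᴴ * B) +
      (t * (1-t)) • ((A - B)ᴴ * (A - B)) := by
    simp only [conjTranspose_add, conjTranspose_smul, conjTranspose_sub, star_trivial,
      Matrix.add_mul, Matrix.mul_add, Matrix.sub_mul, Matrix.mul_sub,
      Matrix.smul_mul, Matrix.mul_smul, smul_sub, smul_add, smul_smul]
    module
  rw [key]
  exact ((psd_smul hA ht).add (psd_smul hB hs)).add
    (psd_smul (posSemidef_conjTranspose_mul_self _) (mul_nonneg ht hs))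

section svd
variable {n₁ n₂ : ℕ} (X : Matrix (Fin n₁) (Fin n₂) ℝ)

noncomputable def Vmat : Matrix (Fin n₂) (Fin n₂) ℝ :=
  ((Matrix.isHermitian_conjTranspose_mul_self X).eigenvectorUnitary : Matrix (Fin n₂) (Fin n₂) ℝ)

noncomputable def muv : Fin n₂ → ℝ := (Matrix.isHermitian_conjTranspose_mul_self X).eigenvalues

lemma hVV : Vmat X * star (Vmat X) = 1 :=
  Unitary.mul_star_self_of_mem (Matrix.isHermitian_conjTranspose_mul_self X).eigenvectorUnitary.2

lemma hV'V : star (Vmat X) * Vmat X = 1 :=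
  Unitary.star_mul_self_of_mem (Matrix.isHermitian_conjTranspose_mul_self X).eigenvectorUnitary.2

lemma hmu0 (i : Fin n₂) : 0 ≤ muv X i :=
  (posSemidef_conjTranspose_mul_self X).eigenvalues_nonneg i

lemma sv_sq (i : Fin n₂) : singularValues X i ^ 2 = muv X i :=
  Real.sq_sqrt (hmu0 X i)

lemma sv_eq_zero_iff (i : Fin n₂) : singularValues X i = 0 ↔ muv X i = 0 :=
  Real.sqrt_eq_zero (hmu0 X i)

lemma hspec : Xᴴ * X = Vmat X * diagonal (muv X) * star (Vmat X) := by
  simpa [Vmat, muv] using (Matrix.isHermitian_conjTranspose_mul_self X).spectral_theorem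

lemma hZZ : (X * Vmat X)ᴴ * (X * Vmat X) = diagonal (muv X) := by
  rw [conjTranspose_mul, Matrix.mul_assoc, ← Matrix.mul_assoc Xᴴ, hspec X,
    ← Matrix.star_eq_conjTranspose (Vmat X)]
  rw [show star (Vmat X) * (Vmat X * diagonal (muv X) * star (Vmat X) * Vmat X)
      = (star (Vmat X) * Vmat X) * diagonal (muv X) * (star (Vmat X) * Vmat X) by
    simp only [Matrix.mul_assoc], hV'V]
  simp

lemma hcol {i : Fin n₂} (hi : muv X i = 0) (j : Fin n₁) : (X * Vmat X) j i = 0 := by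
  have h := congrFun (congrFun (hZZ X) i) i
  rw [Matrix.mul_apply, diagonal_apply_eq, hi] at h
  simp only [conjTranspose_apply, star_trivial] at h
  exact mul_self_eq_zero.mp
    ((Finset.sum_eq_zero_iff_of_nonneg (fun k _ => mul_self_nonneg ((X * Vmat X) k i))).mp h j
      (Finset.mem_univ j))

noncomputable def Ylin : (Fin n₂ → ℝ) →ₗ[ℝ] Matrix (Fin n₁) (Fin n₂) ℝ where
  toFun a := X * Vmat X * diagonal (fun i => a i * (singularValues X i)⁻¹) * star (Vmat X)
  map_add' a b := by
    have h : (fun i => (a + b) i * (singularValues X i)⁻¹) =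
        (fun i => a i * (singularValues X i)⁻¹ + b i * (singularValues X i)⁻¹) := by
      funext i; simp [add_mul]
    rw [h, ← diagonal_add, Matrix.mul_add, Matrix.add_mul]
  map_smul' c a := by
    have h : (fun i => (c • a) i * (singularValues X i)⁻¹) =
        c • (fun i => a i * (singularValues X i)⁻¹) := by
      funext i; simp [mul_assoc]
    rw [h, diagonal_smul, Matrix.mul_smul, Matrix.smul_mul, RingHom.id_apply]
end svd

section svd2
variable {n₁ n₂ : ℕ} (X : Matrix (Fin n₁) (Fin n₂) ℝ)

lemma Ylin_apply (a : Fin n₂ → ℝ) : Ylin X a =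
    X * Vmat X * diagonal (fun i => a i * (singularValues X i)⁻¹) * star (Vmat X) := rfl

lemma Ylin_sv : Ylin X (singularValues X) = X := by
  have key : X * Vmat X * diagonal (fun i => singularValues X i * (singularValues X i)⁻¹)
      = X * Vmat X := by
    ext j i
    rw [Matrix.mul_diagonal]
    by_cases hi : singularValues X i = 0
    · rw [hcol X ((sv_eq_zero_iff X i).mp hi) j, zero_mul]
    · rw [mul_inv_cancel₀ hi, mul_one]
  rw [Ylin_apply, key, Matrix.mul_assoc, hVV, Matrix.mul_one]

lemma Ylin_gram (a : Fin n₂ → ℝ) :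
    (Ylin X a)ᴴ * (Ylin X a) = Vmat X *
      diagonal (fun i => (a i * (singularValues X i)⁻¹) * muv X i
        * (a i * (singularValues X i)⁻¹)) * star (Vmat X) := by
  set Z := X * Vmat X with hZ
  set b : Fin n₂ → ℝ := fun i => a i * (singularValues X i)⁻¹ with hb
  have e1 : (Z * diagonal b * star (Vmat X))ᴴ = Vmat X * ((diagonal b)ᴴ * Zᴴ) := by
    rw [conjTranspose_mul, conjTranspose_mul, ← Matrix.star_eq_conjTranspose (star (Vmat X)),
      star_star]
  have e2 : (diagonal b)ᴴ = diagonal b := by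
    rw [diagonal_conjTranspose]
    congr 1
  rw [Ylin_apply, e1, e2]
  have e3 : Vmat X * (diagonal b * Zᴴ) * (Z * diagonal b * star (Vmat X)) =
      Vmat X * (diagonal b * (Zᴴ * Z * (diagonal b * star (Vmat X)))) := by
    simp only [Matrix.mul_assoc]
  rw [e3, hZZ]
  have e4 : diagonal b * (diagonal (muv X) * (diagonal b * star (Vmat X))) =
      diagonal b * diagonal (muv X) * diagonal b * star (Vmat X) := by
    simp only [Matrix.mul_assoc]
  rw [e4, diagonal_mul_diagonal, diagonal_mul_diagonal, ← Matrix.mul_assoc]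

end svd2

section svd3
variable {n₁ n₂ : ℕ} (X : Matrix (Fin n₁) (Fin n₂) ℝ)

lemma Ylin_spectral_le {a : Fin n₂ → ℝ} (ha : ∀ i, a i ^ 2 ≤ 1) :
    matSpectralNorm (Ylin X a) ≤ 1 := by
  rw [spectralNorm_le_one_iff, Ylin_gram]
  have key : (1 : Matrix (Fin n₂) (Fin n₂) ℝ) -
      Vmat X * diagonal (fun i => (a i * (singularValues X i)⁻¹) * muv X i
        * (a i * (singularValues X i)⁻¹)) * star (Vmat X) =
      Vmat X * diagonal (fun i => 1 - (a i * (singularValues X i)⁻¹) * muv X i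
        * (a i * (singularValues X i)⁻¹)) * star (Vmat X) := by
    have hd : diagonal (fun i => 1 - (a i * (singularValues X i)⁻¹) * muv X i
        * (a i * (singularValues X i)⁻¹)) =
        1 - diagonal (fun i => (a i * (singularValues X i)⁻¹) * muv X i
        * (a i * (singularValues X i)⁻¹)) := by
      rw [← diagonal_one, ← diagonal_sub]
    rw [hd, Matrix.mul_sub, Matrix.sub_mul, Matrix.mul_one, hVV]
  rw [key]
  apply psd_conj
  intro i
  by_cases hs : singularValues X i = 0
  · simp [hs]
  · have h1 : singularValues X i ^ 2 = muv X i := sv_sq X i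
    have h2 := ha i
    have h3 : (a i * (singularValues X i)⁻¹) * muv X i * (a i * (singularValues X i)⁻¹)
        = a i ^ 2 := by
      field_simp
      nlinarith
    rw [h3]
    linarith

lemma Ylin_rank_le (a : Fin n₂ → ℝ) :
    ((Ylin X a).rank : ℝ) ≤ (Finset.univ.filter (fun i => a i ≠ 0)).card := by
  have h1 : (Ylin X a).rank ≤ (Finset.univ.filter (fun i => a i ≠ 0)).card := by
    rw [Ylin_apply]
    calc (X * Vmat X * diagonal (fun i => a i * (singularValues X i)⁻¹) * star (Vmat X)).rank
        ≤ (X * Vmat X * diagonal (fun i => a i * (singularValues X i)⁻¹)).rank :=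
          Matrix.rank_mul_le_left _ _
      _ ≤ (diagonal (fun i => a i * (singularValues X i)⁻¹)).rank :=
          Matrix.rank_mul_le_right _ _
      _ = Fintype.card {i // a i * (singularValues X i)⁻¹ ≠ 0} := Matrix.rank_diagonal _
      _ ≤ (Finset.univ.filter (fun i => a i ≠ 0)).card := by
          rw [Fintype.card_subtype]
          apply Finset.card_le_card
          apply Finset.monotone_filter_right
          intro i _ hi
          exact fun h => hi (by rw [h, zero_mul])
  exact_mod_cast h1

end svd3

lemma tele_Ico (f : ℕ → ℝ) {p n : ℕ} (hp : p ≤ n) :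
    ∑ k ∈ Finset.Ico p n, (f k - f (k+1)) = f p - f n := by
  rw [Finset.sum_Ico_eq_sub _ hp, Finset.sum_range_sub' f, Finset.sum_range_sub' f]
  ring

lemma tele_sum (f : ℕ → ℝ) (n : ℕ) (hfn : f n = 0) :
    ∑ k ∈ Finset.range n, (f k - f (k+1)) * ((k : ℝ)+1) = ∑ k ∈ Finset.range n, f k := by
  have hA : ∑ k ∈ Finset.range n, f (k+1) * ((k:ℝ)+1) = ∑ k ∈ Finset.range n, f k * k := by
    have h1 := Finset.sum_range_succ' (fun k => f k * (k:ℝ)) n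
    have h2 := Finset.sum_range_succ (fun k => f k * (k:ℝ)) n
    rw [hfn] at h2
    push_cast at h1 h2 ⊢
    linarith
  calc ∑ k ∈ Finset.range n, (f k - f (k+1)) * ((k : ℝ)+1)
      = ∑ k ∈ Finset.range n, (f k * ((k:ℝ)+1) - f (k+1) * ((k:ℝ)+1)) := by
        apply Finset.sum_congr rfl; intro k _; ring
    _ = (∑ k ∈ Finset.range n, f k * ((k:ℝ)+1)) - ∑ k ∈ Finset.range n, f (k+1) * ((k:ℝ)+1) :=
        Finset.sum_sub_distrib _ _
    _ = (∑ k ∈ Finset.range n, f k * ((k:ℝ)+1)) - ∑ k ∈ Finset.range n, f k * (k:ℝ) := by rw [hA]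
    _ = ∑ k ∈ Finset.range n, (f k * ((k:ℝ)+1) - f k * (k:ℝ)) := (Finset.sum_sub_distrib _ _).symm
    _ = ∑ k ∈ Finset.range n, f k := by apply Finset.sum_congr rfl; intro k _; ring



/-- The nuclear norm is the convex envelope of the rank on the spectral norm
unit ball `C`: every function `g` convex on `C` with `g ≤ rank` on `C`
satisfies `g ≤ ‖·‖_*` on `C`. -/
theorem nuclearNorm_convex_envelope_of_rank (n₁ n₂ : ℕ)
    (g : Matrix (Fin n₁) (Fin n₂) ℝ → ℝ)
    (hconv : ∀ A, matSpectralNorm A ≤ 1 → ∀ B, matSpectralNorm B ≤ 1 →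
        ∀ t : ℝ, 0 ≤ t → t ≤ 1 →
          g (t • A + (1 - t) • B) ≤ t * g A + (1 - t) * g B)
    (hle : ∀ X, matSpectralNorm X ≤ 1 → g X ≤ (X.rank : ℝ)) :
    ∀ X : Matrix (Fin n₁) (Fin n₂) ℝ, matSpectralNorm X ≤ 1 → g X ≤ nuclearNorm X := by
  intro X hX
  classical
  set σ := singularValues X with hσdef
  have hσ0 : ∀ i, 0 ≤ σ i := fun i => Real.sqrt_nonneg _
  have hσ1 : ∀ i, σ i ≤ 1 := by
    intro i
    refine le_trans ?_ hX
    rw [matSpectralNorm]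
    exact le_ciSup (Set.Finite.bddAbove (Set.finite_range σ)) i
  set π := Tuple.sort σ with hπ
  have hmono : Monotone (σ ∘ π) := Tuple.monotone_sort σ
  set τ : ℕ → ℝ := fun k => if h : k < n₂ then σ (π (Fin.rev ⟨k, h⟩)) else 0 with hτ
  have hτn : τ n₂ = 0 := dif_neg (lt_irrefl n₂)
  have hτ0 : ∀ k, 0 ≤ τ k := by
    intro k
    simp only [hτ]
    by_cases h : k < n₂
    · rw [dif_pos h]; exact hσ0 _
    · rw [dif_neg h]
  have hτ1 : ∀ k, τ k ≤ 1 := by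
    intro k
    simp only [hτ]
    by_cases h : k < n₂
    · rw [dif_pos h]; exact hσ1 _
    · rw [dif_neg h]; norm_num
  have hτstep : ∀ k, τ (k+1) ≤ τ k := by
    intro k
    by_cases h1 : k+1 < n₂
    · have h0 : k < n₂ := by omega
      simp only [hτ]
      rw [dif_pos h1, dif_pos h0]
      have hrev : (⟨k+1, h1⟩ : Fin n₂).rev ≤ (⟨k, h0⟩ : Fin n₂).rev := by
        rw [Fin.rev_le_rev]
        exact Fin.mk_le_mk.mpr (Nat.le_succ k)
      exact hmono hrev
    · have : τ (k+1) = 0 := dif_neg h1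
      rw [this]
      exact hτ0 k
  set pos : Fin n₂ → ℕ := fun i => ((π.symm i).rev : ℕ) with hposdef
  have hpos_lt : ∀ i, pos i < n₂ := fun i => ((π.symm i).rev).isLt
  have hτpos : ∀ i, τ (pos i) = σ i := by
    intro i
    simp only [hτ]
    rw [dif_pos (hpos_lt i)]
    have h1 : (⟨pos i, hpos_lt i⟩ : Fin n₂) = (π.symm i).rev := Fin.ext rfl
    rw [h1, Fin.rev_rev, Equiv.apply_symm_apply]
  set w : Fin (n₂+1) → ℝ := fun k => if (k:ℕ) < n₂ then τ k - τ ((k:ℕ)+1) else 1 - τ 0 with hw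
  set av : Fin (n₂+1) → (Fin n₂ → ℝ) :=
    fun k i => if pos i ≤ (k:ℕ) ∧ (k:ℕ) < n₂ then 1 else 0 with hav
  have hw0 : ∀ k, 0 ≤ w k := by
    intro k
    simp only [hw]
    by_cases h : (k:ℕ) < n₂
    · rw [if_pos h]; linarith [hτstep (k:ℕ)]
    · rw [if_neg h]; linarith [hτ1 0]
  have hwsum : ∑ k, w k = 1 := by
    rw [Fin.sum_univ_castSucc]
    have hlast : w (Fin.last n₂) = 1 - τ 0 := by
      simp only [hw]; simp
    have hcs : ∀ k : Fin n₂, w k.castSucc = τ (k:ℕ) - τ ((k:ℕ)+1) := by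
      intro k
      simp only [hw]
      simp only [Fin.coe_castSucc]
      rw [if_pos k.isLt]
    rw [hlast, Finset.sum_congr rfl (fun k _ => hcs k)]
    rw [Fin.sum_univ_eq_sum_range (fun k => τ k - τ (k+1)) n₂, Finset.sum_range_sub' τ, hτn]
    ring
  have hmem : ∀ k, matSpectralNorm (Ylin X (av k)) ≤ 1 := by
    intro k
    apply Ylin_spectral_le
    intro i
    simp only [hav]
    split <;> norm_num
  have havsum : ∑ k, w k • av k = σ := by
    funext i
    rw [Finset.sum_apply]
    have hterm : ∀ k : Fin (n₂+1), (w k • av k) i =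
        (fun m : ℕ => if pos i ≤ m ∧ m < n₂ then τ m - τ (m+1) else 0) (k:ℕ) := by
      intro k
      rw [Pi.smul_apply, smul_eq_mul]
      simp only [hav, hw]
      by_cases hc : pos i ≤ (k:ℕ) ∧ (k:ℕ) < n₂
      · rw [if_pos hc, if_pos hc.2, mul_one, if_pos hc]
      · rw [if_neg hc, mul_zero, if_neg hc]
    rw [Finset.sum_congr rfl (fun k _ => hterm k)]
    rw [Fin.sum_univ_eq_sum_range (fun m => if pos i ≤ m ∧ m < n₂ then τ m - τ (m+1) else 0)
      (n₂+1)]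
    rw [← Finset.sum_filter]
    have hset : (Finset.range (n₂+1)).filter (fun m => pos i ≤ m ∧ m < n₂) =
        Finset.Ico (pos i) n₂ := by
      ext m
      simp only [Finset.mem_filter, Finset.mem_range, Finset.mem_Ico]
      omega
    rw [hset, tele_Ico τ (le_of_lt (hpos_lt i)), hτn, sub_zero, hτpos i]
  have hgc : ConvexOn ℝ {M : Matrix (Fin n₁) (Fin n₂) ℝ | matSpectralNorm M ≤ 1} g := by
    refine ⟨convex_specBall, ?_⟩
    intro x hx y hy a b ha hb hab
    have hb' : b = 1 - a := by linarith
    subst hb'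
    exact hconv x hx y hy a ha (by linarith)
  have hXrep : X = ∑ k, w k • Ylin X (av k) := by
    have h1 : Ylin X (∑ k, w k • av k) = ∑ k, w k • Ylin X (av k) := by
      rw [map_sum]
      apply Finset.sum_congr rfl
      intro k _
      rw [_root_.map_smul]
    rw [havsum, hσdef, Ylin_sv] at h1
    exact h1
  have jensen := hgc.map_sum_le (t := Finset.univ) (p := fun k => Ylin X (av k))
    (fun k _ => hw0 k) hwsum (fun k _ => hmem k)
  rw [← hXrep] at jensen
  refine le_trans jensen ?_
  have hbound : ∀ k : Fin (n₂+1),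
      g (Ylin X (av k)) ≤ (if (k:ℕ) < n₂ then ((k:ℕ):ℝ)+1 else 0) := by
    intro k
    by_cases hk : (k:ℕ) < n₂
    · rw [if_pos hk]
      refine le_trans (hle _ (hmem k)) ?_
      refine le_trans (Ylin_rank_le X (av k)) ?_
      have hsub : Finset.univ.filter (fun i => av k i ≠ 0) ⊆
          Finset.univ.filter (fun i => pos i ≤ (k:ℕ)) := by
        apply Finset.monotone_filter_right
        intro i _ hi
        simp only [hav] at hi
        by_contra hc
        exact hi (by rw [if_neg (fun hcc => hc hcc.1)])
      have hcard : (Finset.univ.filter (fun i => pos i ≤ (k:ℕ))).card ≤ (k:ℕ)+1 := by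
        have hmap : ∀ i ∈ Finset.univ.filter (fun i => pos i ≤ (k:ℕ)),
            pos i ∈ Finset.range ((k:ℕ)+1) := by
          intro i hi
          rw [Finset.mem_filter] at hi
          have h2 := hi.2
          exact Finset.mem_range.mpr (by omega)
        have hinj : (↑(Finset.univ.filter (fun i => pos i ≤ (k:ℕ))) : Set (Fin n₂)).InjOn pos := by
          intro i _ j _ hij
          have h3 : (π.symm i).rev = (π.symm j).rev := Fin.ext hij
          have h4 := Fin.rev_injective h3
          exact π.symm.injective h4
        have := Finset.card_le_card_of_injOn pos hmap hinj
        simpa using this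
      have : (Finset.univ.filter (fun i => av k i ≠ 0)).card ≤ (k:ℕ)+1 :=
        le_trans (Finset.card_le_card hsub) hcard
      exact_mod_cast this
    · rw [if_neg hk]
      have hav0 : av k = 0 := by
        funext i
        simp only [hav]
        rw [if_neg (fun hcc => hk hcc.2)]
        rfl
      rw [hav0, map_zero]
      have h0 : matSpectralNorm (0 : Matrix (Fin n₁) (Fin n₂) ℝ) ≤ 1 := by
        rw [← map_zero (Ylin X), ← hav0]
        exact hmem k
      refine le_trans (hle 0 h0) ?_
      rw [Matrix.rank_zero]
      norm_num
  refine le_trans (Finset.sum_le_sum (fun k _ => mul_le_mul_of_nonneg_left (hbound k) (hw0 k))) ?_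
  rw [Fin.sum_univ_castSucc]
  have hlast : w (Fin.last n₂) * (if ((Fin.last n₂ : Fin (n₂+1)):ℕ) < n₂ then
      (((Fin.last n₂ : Fin (n₂+1)):ℕ):ℝ)+1 else 0) = 0 := by
    simp
  rw [hlast, add_zero]
  have hcs : ∀ k : Fin n₂, w k.castSucc * (if ((k.castSucc:Fin (n₂+1)):ℕ) < n₂ then
      (((k.castSucc:Fin (n₂+1)):ℕ):ℝ)+1 else 0) =
      (fun m : ℕ => (τ m - τ (m+1)) * ((m:ℝ)+1)) (k:ℕ) := by
    intro k
    simp only [hw]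
    simp only [Fin.coe_castSucc]
    rw [if_pos k.isLt, if_pos k.isLt]
  rw [Finset.sum_congr rfl (fun k _ => hcs k)]
  rw [Fin.sum_univ_eq_sum_range (fun m => (τ m - τ (m+1)) * ((m:ℝ)+1)) n₂]
  rw [tele_sum τ n₂ hτn]
  have hfinal : ∑ k ∈ Finset.range n₂, τ k = nuclearNorm X := by
    rw [← Fin.sum_univ_eq_sum_range τ n₂]
    have h1 : ∀ k : Fin n₂, τ (k:ℕ) = σ (π (Fin.rev k)) := by
      intro k
      simp only [hτ]
      rw [dif_pos k.isLt]
    rw [Finset.sum_congr rfl (fun k _ => h1 k)]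
    have h2 : ∑ k : Fin n₂, σ (π (Fin.rev k)) = ∑ i, σ i := by
      exact Equiv.sum_comp (Fin.revPerm.trans π) σ
    rw [h2]
    rfl
  rw [hfinal]
end
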